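/- arXiv:alg-geom/9505018 — 8 statements merged into one kernel-verified Lean document; each statement's English description precedes it below -/
import Mathlib

section
/- For every integer p ≥ 2, the plumbing matrix P is invertible over ℚ, and its inverse is given by (P⁻¹)_{i,j} = -min(i,j) + i·j·(p+1)/p² for all 1 ≤ i, j ≤ p-1. -/
/-- The plumbing matrix `P` of the configuration `C_p`: a `(p-1) × (p-1)` matrix
(0-indexed by `Fin (p-1)`, corresponding to the 1-indexed `1,…,p-1` of the paper) with
diagonal entries `-2` except the last one which is `-(p+2)`, entries `1` just off the
diagonal, and `0` elsewhere. -/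
def plumbing (p : ℕ) : Matrix (Fin (p-1)) (Fin (p-1)) ℚ :=
  Matrix.of fun i j =>
    if i = j then (if (i : ℕ) = p - 2 then -((p : ℚ) + 2) else -2)
    else if (i : ℕ) + 1 = (j : ℕ) ∨ (j : ℕ) + 1 = (i : ℕ) then 1 else 0

def Qinv (p : ℕ) : Matrix (Fin (p-1)) (Fin (p-1)) ℚ :=
  Matrix.of fun i j =>
    -(min ((i : ℕ) + 1) ((j : ℕ) + 1) : ℚ)
      + ((i : ℕ) + 1) * ((j : ℕ) + 1) * ((p : ℚ) + 1) / (p : ℚ) ^ 2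

lemma tri_sum {n : ℕ} (d : ℚ) (i : Fin n) (g : Fin n → ℚ) :
    ∑ j : Fin n, ((if i = j then d
        else if (i:ℕ)+1 = (j:ℕ) ∨ (j:ℕ)+1 = (i:ℕ) then 1 else 0) * g j)
      = d * g i
        + (if h : (i:ℕ)+1 < n then g ⟨(i:ℕ)+1, h⟩ else 0)
        + (if h : (i:ℕ) ≠ 0 then
            g ⟨(i:ℕ)-1, lt_of_le_of_lt (Nat.pred_le _) i.isLt⟩ else 0) := by
  have key : ∀ j : Fin n,
      (if i = j then d
        else if (i:ℕ)+1 = (j:ℕ) ∨ (j:ℕ)+1 = (i:ℕ) then 1 else 0) * g j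
      = (if j = i then d * g i else 0)
        + (if (i:ℕ)+1 = (j:ℕ) then g j else 0)
        + (if (j:ℕ)+1 = (i:ℕ) then g j else 0) := by
    intro j
    rcases eq_or_ne i j with h | h
    · subst h
      simp [if_neg (by omega : ¬ (i:ℕ)+1 = (i:ℕ))]
    · have h' : j ≠ i := h.symm
      have hv : (i:ℕ) ≠ (j:ℕ) := fun hh => h (Fin.ext hh)
      rcases eq_or_ne ((i:ℕ)+1) (j:ℕ) with h1 | h1
      · simp [h, h', h1, if_neg (by omega : ¬ (j:ℕ)+1 = (i:ℕ))]
      · rcases eq_or_ne ((j:ℕ)+1) (i:ℕ) with h2 | h2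
        · simp [h, h', h1, h2]
        · simp [h, h', h1, h2]
  rw [Finset.sum_congr rfl (fun j _ => key j)]
  rw [Finset.sum_add_distrib, Finset.sum_add_distrib]
  congr 1
  · congr 1
    · simp
    · by_cases h : (i:ℕ)+1 < n
      · rw [dif_pos h]
        have : ∀ j : Fin n, ((i:ℕ)+1 = (j:ℕ)) ↔ (j = ⟨(i:ℕ)+1, h⟩) := by
          intro j; simp only [Fin.ext_iff, Fin.val_mk]; omega
        rw [Finset.sum_congr rfl (fun j _ => by rw [if_congr (this j) rfl rfl])]
        simp
      · rw [dif_neg h]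
        apply Finset.sum_eq_zero
        intro j _
        rw [if_neg]
        have := j.isLt; omega
  · by_cases h : (i:ℕ) ≠ 0
    · rw [dif_pos h]
      have hlt : (i:ℕ)-1 < n := lt_of_le_of_lt (Nat.pred_le _) i.isLt
      have : ∀ j : Fin n, ((j:ℕ)+1 = (i:ℕ)) ↔ (j = ⟨(i:ℕ)-1, hlt⟩) := by
        intro j; simp only [Fin.ext_iff, Fin.val_mk]; omega
      rw [Finset.sum_congr rfl (fun j _ => by rw [if_congr (this j) rfl rfl])]
      simp
    · rw [dif_neg h]
      push_neg at h
      apply Finset.sum_eq_zero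
      intro j _
      rw [if_neg]; omega

lemma plumbing_mul_Qinv (p : ℕ) (hp : 2 ≤ p) : plumbing p * Qinv p = 1 := by
  obtain ⟨m, rfl⟩ : ∃ m, p = m + 2 := ⟨p - 2, by omega⟩
  have hq : ((m:ℚ) + 2) ≠ 0 := by positivity
  ext i k
  have hi1 : (i:ℕ) < m + 1 := by have := i.isLt; omega
  have hk1 : (k:ℕ) < m + 1 := by have := k.isLt; omega
  have hik : (i = k) ↔ ((i:ℕ) = (k:ℕ)) := Fin.ext_iff
  rw [Matrix.mul_apply, Matrix.one_apply]
  simp only [plumbing, Matrix.of_apply]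
  rw [tri_sum]
  simp only [Qinv, Matrix.of_apply, Fin.val_mk, hik]
  by_cases hi : (i:ℕ) = m + 2 - 2
  · rw [if_pos hi, dif_neg (by omega)]
    by_cases h0 : (i:ℕ) ≠ 0
    · rw [dif_pos h0]
      rcases eq_or_ne ((k:ℕ)) m with hk | hk
      · rw [min_eq_right (show ((k:ℕ):ℚ)+1 ≤ ((i:ℕ):ℚ)+1 by
              exact_mod_cast (by omega : (k:ℕ)+1 ≤ (i:ℕ)+1)),
          min_eq_left (show ((((i:ℕ)-1:ℕ)):ℚ)+1 ≤ ((k:ℕ):ℚ)+1 by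
              exact_mod_cast (by omega : (i:ℕ)-1+1 ≤ (k:ℕ)+1)),
          if_pos (by omega : (i:ℕ) = (k:ℕ)),
          Nat.cast_sub (by omega : 1 ≤ (i:ℕ)),
          show ((i:ℕ):ℚ) = (m:ℚ) by exact_mod_cast (by omega : (i:ℕ) = m),
          show ((k:ℕ):ℚ) = (m:ℚ) by exact_mod_cast hk]
        push_cast
        field_simp
        ring
      · rw [min_eq_right (show ((k:ℕ):ℚ)+1 ≤ ((i:ℕ):ℚ)+1 by
              exact_mod_cast (by omega : (k:ℕ)+1 ≤ (i:ℕ)+1)),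
          min_eq_right (show ((k:ℕ):ℚ)+1 ≤ ((((i:ℕ)-1:ℕ)):ℚ)+1 by
              exact_mod_cast (by omega : (k:ℕ)+1 ≤ (i:ℕ)-1+1)),
          if_neg (by omega : ¬ (i:ℕ) = (k:ℕ)),
          Nat.cast_sub (by omega : 1 ≤ (i:ℕ)),
          show ((i:ℕ):ℚ) = (m:ℚ) by exact_mod_cast (by omega : (i:ℕ) = m)]
        push_cast
        field_simp
        ring
    · push_neg at h0
      rw [dif_neg (by omega)]
      have hm : m = 0 := by omega
      rw [show ((i:ℕ):ℚ) = 0 by exact_mod_cast h0,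
          show ((k:ℕ):ℚ) = 0 by exact_mod_cast (by omega : (k:ℕ) = 0),
          if_pos (by omega : (i:ℕ) = (k:ℕ)), hm]
      norm_num
  · rw [if_neg hi, dif_pos (by omega : (i:ℕ)+1 < m+2-1)]
    by_cases h0 : (i:ℕ) ≠ 0
    · rw [dif_pos h0]
      rcases lt_trichotomy ((i:ℕ)) ((k:ℕ)) with h | h | h
      · rw [min_eq_left (show ((i:ℕ):ℚ)+1 ≤ ((k:ℕ):ℚ)+1 by
              exact_mod_cast (by omega : (i:ℕ)+1 ≤ (k:ℕ)+1)),
          min_eq_left (show ((((i:ℕ)+1:ℕ)):ℚ)+1 ≤ ((k:ℕ):ℚ)+1 by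
              exact_mod_cast (by omega : (i:ℕ)+1+1 ≤ (k:ℕ)+1)),
          min_eq_left (show ((((i:ℕ)-1:ℕ)):ℚ)+1 ≤ ((k:ℕ):ℚ)+1 by
              exact_mod_cast (by omega : (i:ℕ)-1+1 ≤ (k:ℕ)+1)),
          if_neg (by omega : ¬ (i:ℕ) = (k:ℕ)),
          Nat.cast_sub (by omega : 1 ≤ (i:ℕ))]
        push_cast
        field_simp
        ring
      · rw [min_eq_left (show ((i:ℕ):ℚ)+1 ≤ ((k:ℕ):ℚ)+1 by
              exact_mod_cast (by omega : (i:ℕ)+1 ≤ (k:ℕ)+1)),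
          min_eq_right (show ((k:ℕ):ℚ)+1 ≤ ((((i:ℕ)+1:ℕ)):ℚ)+1 by
              exact_mod_cast (by omega : (k:ℕ)+1 ≤ (i:ℕ)+1+1)),
          min_eq_left (show ((((i:ℕ)-1:ℕ)):ℚ)+1 ≤ ((k:ℕ):ℚ)+1 by
              exact_mod_cast (by omega : (i:ℕ)-1+1 ≤ (k:ℕ)+1)),
          if_pos h,
          Nat.cast_sub (by omega : 1 ≤ (i:ℕ)),
          show ((k:ℕ):ℚ) = ((i:ℕ):ℚ) by exact_mod_cast h.symm]
        push_cast
        field_simp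
        ring
      · rw [min_eq_right (show ((k:ℕ):ℚ)+1 ≤ ((i:ℕ):ℚ)+1 by
              exact_mod_cast (by omega : (k:ℕ)+1 ≤ (i:ℕ)+1)),
          min_eq_right (show ((k:ℕ):ℚ)+1 ≤ ((((i:ℕ)+1:ℕ)):ℚ)+1 by
              exact_mod_cast (by omega : (k:ℕ)+1 ≤ (i:ℕ)+1+1)),
          min_eq_right (show ((k:ℕ):ℚ)+1 ≤ ((((i:ℕ)-1:ℕ)):ℚ)+1 by
              exact_mod_cast (by omega : (k:ℕ)+1 ≤ (i:ℕ)-1+1)),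
          if_neg (by omega : ¬ (i:ℕ) = (k:ℕ)),
          Nat.cast_sub (by omega : 1 ≤ (i:ℕ))]
        push_cast
        field_simp
        ring
    · push_neg at h0
      rw [dif_neg (by omega)]
      rcases Nat.eq_zero_or_pos ((k:ℕ)) with hk | hk
      · rw [min_eq_right (show ((k:ℕ):ℚ)+1 ≤ ((i:ℕ):ℚ)+1 by
              exact_mod_cast (by omega : (k:ℕ)+1 ≤ (i:ℕ)+1)),
          min_eq_right (show ((k:ℕ):ℚ)+1 ≤ ((((i:ℕ)+1:ℕ)):ℚ)+1 by
              exact_mod_cast (by omega : (k:ℕ)+1 ≤ (i:ℕ)+1+1)),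
          if_pos (by omega : (i:ℕ) = (k:ℕ))]
        push_cast
        rw [show ((i:ℕ):ℚ) = 0 by exact_mod_cast h0,
          show ((k:ℕ):ℚ) = 0 by exact_mod_cast hk]
        field_simp
        ring
      · rw [min_eq_left (show ((i:ℕ):ℚ)+1 ≤ ((k:ℕ):ℚ)+1 by
              exact_mod_cast (by omega : (i:ℕ)+1 ≤ (k:ℕ)+1)),
          min_eq_left (show ((((i:ℕ)+1:ℕ)):ℚ)+1 ≤ ((k:ℕ):ℚ)+1 by
              exact_mod_cast (by omega : (i:ℕ)+1+1 ≤ (k:ℕ)+1)),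
          if_neg (by omega : ¬ (i:ℕ) = (k:ℕ))]
        push_cast
        rw [show ((i:ℕ):ℚ) = 0 by exact_mod_cast h0]
        field_simp
        ring

/-- for `p ≥ 2` the plumbing matrix is invertible over `ℚ` and
`(P⁻¹)_{i,j} = -min(i,j) + i·j·(p+1)/p²` (1-indexed). -/
theorem stmt_0 (p : ℕ) (hp : 2 ≤ p) :
    IsUnit (plumbing p).det ∧
    ∀ i j : Fin (p-1),
      (plumbing p)⁻¹ i j =
        -(min ((i : ℕ) + 1) ((j : ℕ) + 1) : ℚ)
          + ((i : ℕ) + 1) * ((j : ℕ) + 1) * ((p : ℚ) + 1) / (p : ℚ) ^ 2 := by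
  have h := plumbing_mul_Qinv p hp
  refine ⟨Matrix.isUnit_det_of_right_inverse h, fun i j => ?_⟩
  rw [Matrix.inv_eq_right_inv h]
  rfl
end

section
/- Let p ≥ 2 be an integer and let D be the (p-1)×(p-1) matrix with D_{i,i} = 1 for all i, D_{i,i-1} = -1 for 2 ≤ i ≤ p-1, and all other entries 0 (expressing the basis δ_i = γ_i - γ_{i-1}, δ_1 = γ_1 in terms of γ_1,…,γ_{p-1}). Then D·P⁻¹·Dᵀ equals the matrix whose diagonal entries are -(p²-p-1)/p² and whose off-diagonal entries are (p+1)/p²; equivalently, δ_i² = -(p²-p-1)/p² and δ_i·δ_j = (p+1)/p² for i ≠ j. -/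
/-- The change of basis matrix `D` expressing `δ_i = γ_i - γ_{i-1}` (`δ_1 = γ_1`)
in terms of `γ_1,…,γ_{p-1}`: `D_{i,i} = 1`, `D_{i,i-1} = -1`, `0` elsewhere. -/
def matD (p : ℕ) : Matrix (Fin (p-1)) (Fin (p-1)) ℚ :=
  Matrix.of fun i j =>
    if i = j then 1 else if (j : ℕ) + 1 = (i : ℕ) then -1 else 0

/-- The target matrix. -/
def matM (p : ℕ) : Matrix (Fin (p-1)) (Fin (p-1)) ℚ :=
  Matrix.of fun i j =>
    if i = j then -(((p : ℚ)^2 - p - 1) / (p : ℚ)^2) else ((p : ℚ) + 1) / (p : ℚ)^2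

/-- The inverse of the target matrix: `N_{ij} = -(p+1) - δ_{ij}`. -/
def matN (p : ℕ) : Matrix (Fin (p-1)) (Fin (p-1)) ℚ :=
  Matrix.of fun i j =>
    if i = j then -((p : ℚ) + 2) else -((p : ℚ) + 1)

open Matrix

lemma sum_d (n a : ℕ) (ha : a < n) (f : ℕ → ℚ) :
    ∑ k ∈ Finset.range n, (if k = a then 1 else if a + 1 = k then -1 else 0) * f k
      = f a - (if a + 1 < n then f (a+1) else 0) := by
  have h : ∀ k, (if k = a then (1:ℚ) else if a + 1 = k then -1 else 0) * f k
      = (if k = a then f k else 0) + (if k = a + 1 then -f k else 0) := by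
    intro k; split_ifs <;> first | (exfalso; omega) | ring
  rw [Finset.sum_congr rfl fun k _ => h k, Finset.sum_add_distrib,
    Finset.sum_ite_eq' (Finset.range n) a f,
    Finset.sum_ite_eq' (Finset.range n) (a+1) (fun k => -f k)]
  simp only [Finset.mem_range, ha, if_true]
  split_ifs <;> ring

lemma sum_d' (n a : ℕ) (ha : a < n) (f : ℕ → ℚ) :
    ∑ k ∈ Finset.range n, f k * (if k = a then 1 else if a + 1 = k then -1 else 0)
      = f a - (if a + 1 < n then f (a+1) else 0) := by
  rw [← sum_d n a ha f]
  exact Finset.sum_congr rfl fun k _ => mul_comm _ _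

lemma hMN (p : ℕ) (hp : 2 ≤ p) : matM p * matN p = 1 := by
  have hp0 : (p : ℚ) ≠ 0 := by
    simpa using (Nat.cast_ne_zero (R := ℚ)).mpr (by omega : p ≠ 0)
  ext i j
  rw [Matrix.mul_apply]
  have hi := i.isLt
  have hj := j.isLt
  set a : ℚ := -(((p : ℚ)^2 - p - 1) / (p : ℚ)^2) with ha
  set b : ℚ := ((p : ℚ) + 1) / (p : ℚ)^2 with hb
  have hterm : ∀ k : Fin (p-1), matM p i k * matN p k j
      = b * (-((p:ℚ)+1)) + (if (k:ℕ) = (j:ℕ) then b * (-1) else 0)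
        + (if (k:ℕ) = (i:ℕ) then (-((p:ℚ)+1)) * (a - b)
            + (if (k:ℕ) = (j:ℕ) then (a - b) * (-1) else 0) else 0) := by
    intro k
    simp only [matM, matN, Matrix.of_apply, Fin.ext_iff]
    split_ifs <;> first | (exfalso; omega) | ring
  rw [Finset.sum_congr rfl fun k _ => hterm k]
  rw [Fin.sum_univ_eq_sum_range (fun k =>
      b * (-((p:ℚ)+1)) + (if k = (j:ℕ) then b * (-1) else 0)
        + (if k = (i:ℕ) then (-((p:ℚ)+1)) * (a - b)
            + (if k = (j:ℕ) then (a - b) * (-1) else 0) else 0)) (p-1)]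
  rw [Finset.sum_add_distrib, Finset.sum_add_distrib, Finset.sum_const,
    Finset.sum_ite_eq' (Finset.range (p-1)) ((j:ℕ)) (fun _ => b * (-1)),
    Finset.sum_ite_eq' (Finset.range (p-1)) ((i:ℕ))]
  simp only [Finset.mem_range, hi, hj, if_true, Finset.card_range, nsmul_eq_mul]
  have hcast : ((p - 1 : ℕ) : ℚ) = (p : ℚ) - 1 := by
    have h1 : (1:ℕ) ≤ p := by omega
    push_cast [h1]; ring
  rw [hcast, Matrix.one_apply, ha, hb]
  rcases eq_or_ne i j with h | h
  · simp only [h, if_pos rfl, ↓reduceIte]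
    field_simp
    ring
  · have hv : (i:ℕ) ≠ (j:ℕ) := fun hh => h (Fin.ext hh)
    simp only [hv, h, if_false]
    field_simp
    ring

lemma hPeq (p : ℕ) (hp : 2 ≤ p) :
    plumbing p = (matD p)ᵀ * matN p * matD p := by
  ext i j
  have hi := i.isLt
  have hj := j.isLt
  rw [Matrix.mul_apply]
  have hinner : ∀ k : Fin (p-1), ((matD p)ᵀ * matN p) i k
      = (if (i:ℕ) = (k:ℕ) then -((p:ℚ)+2) else -((p:ℚ)+1))
        - (if (i:ℕ) + 1 < p - 1 then
            (if (i:ℕ)+1 = (k:ℕ) then -((p:ℚ)+2) else -((p:ℚ)+1)) else 0) := by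
    intro k
    rw [Matrix.mul_apply]
    have hterm : ∀ l : Fin (p-1), (matD p)ᵀ i l * matN p l k
        = (if (l:ℕ) = (i:ℕ) then 1 else if (i:ℕ) + 1 = (l:ℕ) then -1 else 0)
          * (if (l:ℕ) = (k:ℕ) then -((p:ℚ)+2) else -((p:ℚ)+1)) := by
      intro l
      simp only [matD, matN, Matrix.transpose_apply, Matrix.of_apply, Fin.ext_iff]
    rw [Finset.sum_congr rfl fun l _ => hterm l]
    rw [Fin.sum_univ_eq_sum_range (fun l =>
        (if l = (i:ℕ) then (1:ℚ) else if (i:ℕ) + 1 = l then -1 else 0)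
          * (if l = (k:ℕ) then -((p:ℚ)+2) else -((p:ℚ)+1))) (p-1)]
    rw [sum_d (p-1) (i:ℕ) hi (fun l => if l = (k:ℕ) then -((p:ℚ)+2) else -((p:ℚ)+1))]
  rw [Finset.sum_congr rfl fun k _ => by rw [hinner k]]
  have hDterm : ∀ k : Fin (p-1), matD p k j
      = (if (k:ℕ) = (j:ℕ) then 1 else if (j:ℕ) + 1 = (k:ℕ) then -1 else 0) := by
    intro k
    simp only [matD, Matrix.of_apply, Fin.ext_iff]
  rw [Finset.sum_congr rfl fun k _ => by rw [hDterm k]]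
  set G : ℕ → ℚ := fun m =>
      (if (i:ℕ) = m then -((p:ℚ)+2) else -((p:ℚ)+1))
        - (if (i:ℕ) + 1 < p - 1 then
            (if (i:ℕ)+1 = m then -((p:ℚ)+2) else -((p:ℚ)+1)) else 0) with hG
  rw [Fin.sum_univ_eq_sum_range (fun k =>
      G k * (if k = (j:ℕ) then 1 else if (j:ℕ) + 1 = k then -1 else 0)) (p-1)]
  rw [sum_d' (p-1) (j:ℕ) hj G]
  simp only [hG, plumbing, Matrix.of_apply, Fin.ext_iff]
  split_ifs <;> first | (exfalso; omega) | ring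

/-- `D·P⁻¹·Dᵀ` has diagonal entries `-(p²-p-1)/p²` and off-diagonal
entries `(p+1)/p²`; i.e. `δ_i² = -(p²-p-1)/p²` and `δ_i·δ_j = (p+1)/p²` for `i ≠ j`. -/
theorem stmt_3 (p : ℕ) (hp : 2 ≤ p) :
    ∀ i j : Fin (p-1),
      (matD p * (plumbing p)⁻¹ * (matD p).transpose) i j =
        if i = j then -(((p : ℚ)^2 - p - 1) / (p : ℚ)^2) else ((p : ℚ) + 1) / (p : ℚ)^2 := by
  have hdet : (matD p).det = 1 := by
    rw [Matrix.det_of_lowerTriangular (matD p)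
      (by intro i j hij
          have hv : (i:ℕ) < (j:ℕ) := OrderDual.toDual_lt_toDual.mp hij
          simp only [matD, Matrix.of_apply]
          rw [if_neg (by intro h; subst h; omega), if_neg (by omega)])]
    simp [matD]
  have hDu : IsUnit (matD p).det := by rw [hdet]; exact isUnit_one
  have hDTu : IsUnit ((matD p)ᵀ).det := by rw [Matrix.det_transpose, hdet]; exact isUnit_one
  have hNinv : (matN p)⁻¹ = matM p := Matrix.inv_eq_left_inv (hMN p hp)
  have hPinv : (plumbing p)⁻¹ = (matD p)⁻¹ * (matM p * ((matD p)ᵀ)⁻¹) := by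
    rw [hPeq p hp, Matrix.mul_inv_rev, Matrix.mul_inv_rev, hNinv]
  have key : matD p * (plumbing p)⁻¹ * (matD p)ᵀ = matM p := by
    rw [hPinv, ← mul_assoc, Matrix.mul_nonsing_inv _ hDu, one_mul, mul_assoc,
      Matrix.nonsing_inv_mul _ hDTu, mul_one]
  intro i j
  rw [show (matD p).transpose = (matD p)ᵀ from rfl, key]
  simp [matM]
end

section
/- Let p ≥ 2 be an integer and s ∈ ℚ. For every x ∈ ℚ^{p-1} with Σ_{i=1}^{p-1} x_i = s one has Q(x) ≤ -s²/(p²(p-1)), with equality if and only if x is the constant vector with every coordinate equal to s/(p-1). In other words, among vectors with fixed coordinate sum s, the minimum absolute value of Q is s²/(p²(p-1)), attained exactly at the constant vector. -/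
/-- The quadratic form `Q` on `ℚ^{p-1}`, the intersection form of
`H₂(C_p, ∂C_p; ℚ)` in the basis `δ_1,…,δ_{p-1}`. -/
def Qform (p : ℕ) (x : Fin (p-1) → ℚ) : ℚ :=
  -(((p : ℚ)^2 - p - 1) / (p : ℚ)^2) * ∑ i, (x i)^2
    + (2 * ((p : ℚ) + 1) / (p : ℚ)^2) * ∑ i, ∑ j, (if i < j then x i * x j else 0)

lemma off_diag_sum {n : ℕ} (x : Fin n → ℚ) :
    2 * ∑ i, ∑ j, (if i < j then x i * x j else 0)
      = (∑ i, x i)^2 - ∑ i, (x i)^2 := by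
  have h1 : (∑ i, x i)^2 = ∑ i, ∑ j, x i * x j := by
    rw [sq, Finset.sum_mul_sum]
  have h2 : ∀ i j : Fin n, x i * x j =
      (if i < j then x i * x j else 0) + (if j < i then x i * x j else 0)
        + (if i = j then x i * x j else 0) := by
    intro i j
    rcases lt_trichotomy i j with h|h|h
    · simp [h, h.ne, not_lt_of_gt h]
    · simp [h, lt_irrefl]
    · simp [h, h.ne', not_lt_of_gt h]
  have h3 : ∑ i, ∑ j, x i * x j =
      (∑ i, ∑ j, (if i < j then x i * x j else 0))
        + (∑ i, ∑ j, (if j < i then x i * x j else 0))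
        + (∑ i, ∑ j, (if i = j then x i * x j else 0)) := by
    rw [← Finset.sum_add_distrib, ← Finset.sum_add_distrib]
    refine Finset.sum_congr rfl fun i _ => ?_
    rw [← Finset.sum_add_distrib, ← Finset.sum_add_distrib]
    exact Finset.sum_congr rfl fun j _ => h2 i j
  have h4 : (∑ i, ∑ j, (if j < i then x i * x j else 0))
      = ∑ i, ∑ j, (if i < j then x i * x j else 0) := by
    rw [Finset.sum_comm]
    refine Finset.sum_congr rfl fun i _ => Finset.sum_congr rfl fun j _ => ?_
    rw [mul_comm]
  have h5 : (∑ i, ∑ j, (if i = j then x i * x j else 0)) = ∑ i, (x i)^2 := by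
    refine Finset.sum_congr rfl fun i _ => ?_
    rw [Finset.sum_ite_eq]
    simp [sq]
  rw [h1, h3, h4, h5]; ring

/-- among vectors `x ∈ ℚ^{p-1}` with fixed coordinate sum `s`, one has
`Q(x) ≤ -s²/(p²(p-1))`, with equality exactly at the constant vector with coordinates
`s/(p-1)`. -/
theorem stmt_5 (p : ℕ) (hp : 2 ≤ p) (s : ℚ) (x : Fin (p-1) → ℚ)
    (hs : ∑ i, x i = s) :
    Qform p x ≤ -s^2 / ((p : ℚ)^2 * ((p : ℚ) - 1)) ∧
    (Qform p x = -s^2 / ((p : ℚ)^2 * ((p : ℚ) - 1)) ↔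
      x = fun _ => s / ((p : ℚ) - 1)) := by
  have hp2 : (2:ℚ) ≤ (p:ℚ) := by exact_mod_cast hp
  have hpne : (p:ℚ) ≠ 0 := by linarith
  set c : ℚ := (p:ℚ) - 1 with hc
  have hcpos : 0 < c := by simp only [hc]; linarith
  have hcne : c ≠ 0 := ne_of_gt hcpos
  have hcard : ((p-1 : ℕ) : ℚ) = c := by
    rw [Nat.cast_sub (by omega : 1 ≤ p)]; simp [hc]
  -- sum of squares S2 and the auxiliary sum T
  set S2 : ℚ := ∑ i, (x i)^2 with hS2
  set T : ℚ := ∑ i, (c * x i - s)^2 with hT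
  have hTnn : 0 ≤ T := Finset.sum_nonneg fun i _ => sq_nonneg _
  have hTval : T = c^2 * S2 - c * s^2 := by
    have : ∀ i : Fin (p-1), (c * x i - s)^2
        = c^2 * (x i)^2 - (2*c*s) * x i + s^2 := fun i => by ring
    rw [hT]
    simp only [this]
    rw [Finset.sum_add_distrib, Finset.sum_sub_distrib, ← Finset.mul_sum,
      ← Finset.mul_sum, hs, Finset.sum_const, Finset.card_univ, Fintype.card_fin,
      nsmul_eq_mul, hcard, ← hS2]
    ring
  have hpair : ∑ i, ∑ j, (if i < j then x i * x j else 0) = (s^2 - S2)/2 := by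
    have := off_diag_sum x
    rw [hs, ← hS2] at this
    linarith
  have hQ : Qform p x = -s^2 / ((p:ℚ)^2 * c) - T / c^2 := by
    rw [Qform, hpair, ← hS2, hTval, hc]
    have hc1 : (p:ℚ) - 1 ≠ 0 := by linarith
    field_simp
    ring
  have hle : Qform p x ≤ -s^2 / ((p:ℚ)^2 * c) := by
    rw [hQ]
    have : 0 ≤ T / c^2 := div_nonneg hTnn (sq_nonneg c)
    linarith
  refine ⟨hle, ?_, ?_⟩
  · intro h
    have hT0 : T = 0 := by
      rw [hQ] at h
      have : T / c^2 = 0 := by linarith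
      field_simp at this
      simpa using this
    rw [hT] at hT0
    have hall := (Finset.sum_eq_zero_iff_of_nonneg
      (fun i (_ : i ∈ Finset.univ) => sq_nonneg (c * x i - s))).mp hT0
    funext i
    have hi := hall i (Finset.mem_univ i)
    have : c * x i - s = 0 := by
      have := sq_eq_zero_iff.mp hi
      exact this
    field_simp
    linarith
  · intro h
    have hT0 : T = 0 := by
      rw [hT]
      refine Finset.sum_eq_zero fun i _ => ?_
      rw [h]
      field_simp
      ring
    rw [hQ, hT0]
    simp
end

section
/- Let p ≥ 2, t ≥ 0, 1 ≤ b ≤ p-1 and r ≥ 1 be integers, let e = ⟨t,t+1;b⟩, and set s = (p-1)t + b + r·p². Then -s²/(p²(p-1)) - Q(e) = -(1/(p-1))·(b + b² + 2br + p²r² + 2rt(p-1) - bp), and this quantity is negative. -/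
/-- The vector `⟨t,t+1;b⟩ ∈ ℤ^{p-1}`: the first `p-1-b` coordinates equal `t`,
the last `b` coordinates equal `t+1`. -/
def vecTB (p t b : ℕ) : Fin (p-1) → ℚ :=
  fun i => if (i : ℕ) < p - 1 - b then (t : ℚ) else (t : ℚ) + 1

lemma sum_ite_fin (n k : ℕ) (hk : k ≤ n) (A B : ℚ) :
    (∑ i : Fin n, if (i : ℕ) < k then A else B) = k * A + ((n - k : ℕ) : ℚ) * B := by
  rw [Fin.sum_univ_eq_sum_range (fun i => if i < k then A else B), Finset.range_eq_Ico,
    ← Finset.sum_Ico_consecutive _ (Nat.zero_le k) hk]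
  have h1 : (∑ i ∈ Finset.Ico 0 k, if i < k then A else B) = k * A := by
    rw [Finset.sum_congr rfl (fun i hi => if_pos (Finset.mem_Ico.mp hi).2)]
    simp [mul_comm]
  have h2 : (∑ i ∈ Finset.Ico k n, if i < k then A else B) = ((n - k : ℕ) : ℚ) * B := by
    rw [Finset.sum_congr rfl (fun i hi => if_neg (not_lt.mpr (Finset.mem_Ico.mp hi).1))]
    simp [Nat.card_Ico, mul_comm]
  rw [h1, h2]

lemma double_sum_eq (n : ℕ) (x : Fin n → ℚ) :
    2 * (∑ i, ∑ j, if i < j then x i * x j else 0)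
      = (∑ i, x i)^2 - ∑ i, (x i)^2 := by
  have key : (∑ i, ∑ j, if i < j then x i * x j else 0)
      + ((∑ i, ∑ j, if j < i then x i * x j else 0) + ∑ i, (x i)^2)
      = (∑ i, x i)^2 := by
    rw [pow_two, Finset.sum_mul_sum Finset.univ Finset.univ x x,
      ← Finset.sum_add_distrib, ← Finset.sum_add_distrib]
    refine Finset.sum_congr rfl fun i _ => ?_
    have hx : (x i)^2 = ∑ j, if i = j then x i * x j else 0 := by
      simp [sq]
    rw [hx, ← Finset.sum_add_distrib, ← Finset.sum_add_distrib]
    refine Finset.sum_congr rfl fun j _ => ?_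
    rcases lt_trichotomy i j with h | h | h
    · simp [h, h.ne, not_lt.mpr h.le]
    · simp [h]
    · simp [h, h.ne', not_lt.mpr h.le]
  have swap : (∑ i, ∑ j, if j < i then x i * x j else 0)
      = ∑ i, ∑ j, if i < j then x i * x j else 0 := by
    rw [Finset.sum_comm]
    exact Finset.sum_congr rfl fun i _ => Finset.sum_congr rfl fun j _ => by
      rw [mul_comm]
  rw [swap] at key
  linarith

set_option maxHeartbeats 1000000 in
/-- for `e = ⟨t,t+1;b⟩` and `s = (p-1)t + b + r·p²` with `r ≥ 1`,
`-s²/(p²(p-1)) - Q(e) = -(1/(p-1))·(b + b² + 2br + p²r² + 2rt(p-1) - bp)`,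
and this quantity is negative. -/
theorem stmt_6 (p t b r : ℕ) (hp : 2 ≤ p) (hb1 : 1 ≤ b) (hb2 : b ≤ p - 1) (hr : 1 ≤ r)
    (s : ℚ) (hs : s = ((p : ℚ) - 1) * t + b + r * (p : ℚ)^2) :
    -s^2 / ((p : ℚ)^2 * ((p : ℚ) - 1)) - Qform p (vecTB p t b) =
      -(1 / ((p : ℚ) - 1)) *
        ((b : ℚ) + (b : ℚ)^2 + 2 * b * r + (p : ℚ)^2 * (r : ℚ)^2
          + 2 * r * t * ((p : ℚ) - 1) - b * p) ∧
    -s^2 / ((p : ℚ)^2 * ((p : ℚ) - 1)) - Qform p (vecTB p t b) < 0 := by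
  have hkb : p - 1 - (p - 1 - b) = b := Nat.sub_sub_self hb2
  have hPQ : (2 : ℚ) ≤ (p : ℚ) := by exact_mod_cast hp
  have hBQ : (1 : ℚ) ≤ (b : ℚ) := by exact_mod_cast hb1
  have hRQ : (1 : ℚ) ≤ (r : ℚ) := by exact_mod_cast hr
  have hTQ : (0 : ℚ) ≤ (t : ℚ) := Nat.cast_nonneg t
  have hB2 : (b : ℚ) ≤ (p : ℚ) - 1 := by
    have := Nat.cast_le (α := ℚ).mpr hb2
    rwa [Nat.cast_sub (by omega), Nat.cast_one] at this
  have hkQ : ((p - 1 - b : ℕ) : ℚ) = (p : ℚ) - 1 - b := by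
    rw [Nat.cast_sub hb2, Nat.cast_sub (by omega), Nat.cast_one]
  -- compute the sums
  have hSq : (∑ i, (vecTB p t b i)^2)
      = ((p : ℚ) - 1 - b) * (t : ℚ)^2 + (b : ℚ) * ((t : ℚ) + 1)^2 := by
    have : (∑ i, (vecTB p t b i)^2)
        = ∑ i : Fin (p - 1), if (i : ℕ) < p - 1 - b then (t : ℚ)^2 else ((t : ℚ) + 1)^2 := by
      refine Finset.sum_congr rfl fun i _ => ?_
      simp only [vecTB, apply_ite (·^2)]
    rw [this, sum_ite_fin _ _ (Nat.sub_le _ _), hkb, hkQ]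
  have hS : (∑ i, vecTB p t b i) = ((p : ℚ) - 1 - b) * t + (b : ℚ) * ((t : ℚ) + 1) := by
    have : (∑ i, vecTB p t b i)
        = ∑ i : Fin (p - 1), if (i : ℕ) < p - 1 - b then (t : ℚ) else (t : ℚ) + 1 :=
      Finset.sum_congr rfl fun i _ => rfl
    rw [this, sum_ite_fin _ _ (Nat.sub_le _ _), hkb, hkQ]
  have hD := double_sum_eq (p - 1) (vecTB p t b)
  rw [hSq, hS] at hD
  have hQ : Qform p (vecTB p t b)
      = -(((p : ℚ)^2 - p - 1) / (p : ℚ)^2)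
          * (((p : ℚ) - 1 - b) * (t : ℚ)^2 + (b : ℚ) * ((t : ℚ) + 1)^2)
        + (2 * ((p : ℚ) + 1) / (p : ℚ)^2)
          * (((((p : ℚ) - 1 - b) * t + (b : ℚ) * ((t : ℚ) + 1))^2
              - (((p : ℚ) - 1 - b) * (t : ℚ)^2 + (b : ℚ) * ((t : ℚ) + 1)^2)) / 2) := by
    have hD2 : (∑ i, ∑ j, if i < j then vecTB p t b i * vecTB p t b j else 0)
        = ((((p : ℚ) - 1 - b) * t + (b : ℚ) * ((t : ℚ) + 1))^2
            - (((p : ℚ) - 1 - b) * (t : ℚ)^2 + (b : ℚ) * ((t : ℚ) + 1)^2)) / 2 := by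
      linarith
    rw [Qform, hSq, hD2]
  have hp0 : (p : ℚ) ≠ 0 := by linarith
  have hp1 : (p : ℚ) - 1 ≠ 0 := by linarith
  have heq : -s^2 / ((p : ℚ)^2 * ((p : ℚ) - 1)) - Qform p (vecTB p t b) =
      -(1 / ((p : ℚ) - 1)) *
        ((b : ℚ) + (b : ℚ)^2 + 2 * b * r + (p : ℚ)^2 * (r : ℚ)^2
          + 2 * r * t * ((p : ℚ) - 1) - b * p) := by
    rw [hQ, hs]
    field_simp
    ring
  refine ⟨heq, ?_⟩
  rw [heq]
  have hE : (0 : ℚ) < (b : ℚ) + (b : ℚ)^2 + 2 * b * r + (p : ℚ)^2 * (r : ℚ)^2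
      + 2 * r * t * ((p : ℚ) - 1) - b * p := by
    nlinarith [mul_nonneg (sub_nonneg.mpr hB2) (mul_nonneg (by linarith : (0:ℚ) ≤ (r:ℚ) - 1) (by linarith : (0:ℚ) ≤ (r:ℚ) + 1)),
      mul_nonneg (by linarith : (0:ℚ) ≤ (b:ℚ) - 1) (sub_nonneg.mpr hB2),
      mul_nonneg (mul_nonneg (by linarith : (0:ℚ) ≤ (r:ℚ)) hTQ) (by linarith : (0:ℚ) ≤ (p:ℚ) - 1),
      mul_pos (by linarith : (0:ℚ) < (b:ℚ)) (by linarith : (0:ℚ) < (r:ℚ)),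
      sq_nonneg ((p:ℚ) * r - (p:ℚ) + 1), sq_nonneg ((p:ℚ) - 1 - b)]
  have hpos : (0 : ℚ) < 1 / ((p : ℚ) - 1) := one_div_pos.mpr (by linarith)
  linarith [mul_pos hpos hE]
end

section
/- Let p ≥ 2, t ≥ 0 and 1 ≤ b ≤ p-1 be integers and let e = ⟨t,t+1;b⟩. If e' ∈ ℤ^{p-1} satisfies Σ_{i=1}^{p-1} e'_i = (p-1)t + b, then Q(e') ≤ Q(e), with equality if and only if e' is obtained from e by permuting its coordinates. -/
open Finset

theorem two_mul_sum_sum_ite_lt {ι R : Type*} [Fintype ι] [LinearOrder ι] [CommRing R]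
    (x : ι → R) :
    2 * ∑ i, ∑ j, (if i < j then x i * x j else 0) = (∑ i, x i) ^ 2 - ∑ i, x i ^ 2 := by
  have hsplit : ∀ i j, x i * x j = (if i < j then x i * x j else 0)
      + (if j < i then x j * x i else 0) + (if i = j then x i * x j else 0) := by
    intro i j
    rcases lt_trichotomy i j with h | rfl | h
    · simp [h, h.not_gt, h.ne]
    · simp
    · simp [h, h.not_gt, h.ne', mul_comm]
  have hsq : (∑ i, x i) ^ 2 = ∑ i, ∑ j, x i * x j := by rw [sq, Fintype.sum_mul_sum]
  rw [hsq, sum_congr rfl fun i _ => sum_congr rfl fun j _ => hsplit i j]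
  simp only [sum_add_distrib, sum_ite_eq, mem_univ, if_true]
  rw [sum_comm (f := fun i j => if j < i then x j * x i else 0)]
  simp only [sq]
  ring

theorem Qform_eq (p : ℕ) (x : Fin (p - 1) → ℚ) :
    Qform p x = ((p + 1) / p ^ 2) * (∑ i, x i) ^ 2 - ∑ i, x i ^ 2 := by
  rcases eq_or_ne p 0 with rfl | hp
  · simp [Qform]
  · rw [Qform]
    field_simp
    linear_combination (p + 1 : ℚ) * two_mul_sum_sum_ite_lt x

theorem card_filter_not_val_lt {n b : ℕ} (hb : b ≤ n) :
    #{i : Fin n | ¬ (i : ℕ) < n - b} = b := by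
  rw [filter_not, card_sdiff_of_subset (filter_subset _ _), Fin.card_filter_val_lt, card_univ,
    Fintype.card_fin]
  omega

theorem Int.zero_le_mul_sub_one (m : ℤ) : 0 ≤ m * (m - 1) := by
  rcases le_or_gt m 0 with h | h <;> nlinarith

section TwoValued

variable {ι : Type*} [Fintype ι]

theorem sum_sq_eq_add_sum_mul (t : ℚ) (x : ι → ℚ) :
    ∑ i, x i ^ 2 = (2 * t + 1) * ∑ i, x i - Fintype.card ι * (t * (t + 1))
      + ∑ i, (x i - t) * (x i - t - 1) := by
  rw [mul_sum, ← nsmul_eq_mul, ← card_univ, ← sum_const, ← sum_sub_distrib, ← sum_add_distrib]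
  exact sum_congr rfl fun i _ => by ring

theorem sum_sq_le_sum_sq_of_sum_eq {t : ℤ} {y : ι → ℚ} (hy : ∀ i, y i = t ∨ y i = t + 1)
    (e : ι → ℤ) (hsum : ∑ i, (e i : ℚ) = ∑ i, y i) :
    ∑ i, y i ^ 2 ≤ ∑ i, (e i : ℚ) ^ 2 ∧
      (∑ i, (e i : ℚ) ^ 2 = ∑ i, y i ^ 2 ↔ ∀ i, (e i : ℚ) = t ∨ (e i : ℚ) = t + 1) := by
  have hy0 : ∑ i, (y i - t) * (y i - t - 1) = 0 :=
    sum_eq_zero fun i _ => by rcases hy i with h | h <;> rw [h] <;> ring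
  have hdiff : ∑ i, (e i : ℚ) ^ 2 - ∑ i, y i ^ 2 = ∑ i, ((e i : ℚ) - t) * (e i - t - 1) := by
    rw [sum_sq_eq_add_sum_mul (t : ℚ), sum_sq_eq_add_sum_mul (t : ℚ) y, hsum, hy0]
    ring
  have hterm (i : ι) : 0 ≤ ((e i : ℚ) - t) * (e i - t - 1) := by
    exact_mod_cast Int.zero_le_mul_sub_one (e i - t)
  constructor
  · linarith [sum_nonneg fun i (_ : i ∈ univ) => hterm i]
  · rw [← sub_eq_zero, hdiff, sum_eq_zero_iff_of_nonneg fun i _ => hterm i]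
    simp [sub_eq_zero, sub_sub]

theorem sum_eq_card_mul_add_card_filter {t : ℚ} {x : ι → ℚ} (hx : ∀ i, x i = t ∨ x i = t + 1) :
    ∑ i, x i = Fintype.card ι * t + #{i | x i = t + 1} := by
  have hx' (i : ι) : x i = t + if x i = t + 1 then 1 else 0 := by
    rcases hx i with h | h <;> simp [h]
  rw [sum_congr rfl fun i _ => hx' i, sum_add_distrib, sum_const, card_univ, nsmul_eq_mul,
    sum_boole]

theorem exists_perm_of_sum_eq {t : ℚ} {x y : ι → ℚ} (hx : ∀ i, x i = t ∨ x i = t + 1)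
    (hy : ∀ i, y i = t ∨ y i = t + 1) (hsum : ∑ i, x i = ∑ i, y i) :
    ∃ σ : Equiv.Perm ι, ∀ i, x i = y (σ i) := by
  have hcard : #{i | x i = t + 1} = #{i | y i = t + 1} := by
    rw [sum_eq_card_mul_add_card_filter hx, sum_eq_card_mul_add_card_filter hy] at hsum
    exact_mod_cast add_left_cancel hsum
  obtain ⟨σ, hσ⟩ := Equiv.Perm.exists_map_finset_eq _ _ hcard
  refine ⟨σ, fun i => ?_⟩
  have hmem : x i = t + 1 ↔ y (σ i) = t + 1 := by
    simpa using congrArg (σ i ∈ ·) hσ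
  rcases hx i with h | h <;> rcases hy (σ i) with h' | h' <;> simp_all

end TwoValued

theorem vecTB_eq_or_eq (p t b : ℕ) (i : Fin (p - 1)) :
    vecTB p t b i = t ∨ vecTB p t b i = t + 1 := by
  unfold vecTB; split_ifs <;> simp

theorem sum_vecTB {p b : ℕ} (t : ℕ) (hp : 1 ≤ p) (hb : b ≤ p - 1) :
    ∑ i, vecTB p t b i = ((p : ℚ) - 1) * t + b := by
  unfold vecTB
  rw [sum_ite, sum_const, sum_const, Fin.card_filter_val_lt, card_filter_not_val_lt hb,
    min_eq_right (Nat.sub_le _ _), nsmul_eq_mul, nsmul_eq_mul, Nat.cast_sub hb, Nat.cast_sub hp]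
  push_cast
  ring

theorem Qform_sub_Qform_of_sum_eq {p : ℕ} {x y : Fin (p - 1) → ℚ} (h : ∑ i, x i = ∑ i, y i) :
    Qform p x - Qform p y = ∑ i, y i ^ 2 - ∑ i, x i ^ 2 := by
  rw [Qform_eq, Qform_eq, h]
  ring

theorem stmt_8_general (p t b : ℕ) (hp : 2 ≤ p) (hb2 : b ≤ p - 1)
    (e' : Fin (p-1) → ℤ)
    (hsum : ∑ i, e' i = ((p : ℤ) - 1) * t + b) :
    Qform p (fun i => (e' i : ℚ)) ≤ Qform p (vecTB p t b) ∧
    (Qform p (fun i => (e' i : ℚ)) = Qform p (vecTB p t b) ↔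
      ∃ σ : Equiv.Perm (Fin (p-1)), ∀ i, (e' i : ℚ) = vecTB p t b (σ i)) := by
  have hvals (i : Fin (p - 1)) :
      vecTB p t b i = ((t : ℤ) : ℚ) ∨ vecTB p t b i = ((t : ℤ) : ℚ) + 1 := by
    simpa using vecTB_eq_or_eq p t b i
  have hsum' : ∑ i, (e' i : ℚ) = ∑ i, vecTB p t b i := by
    rw [sum_vecTB t (by omega) hb2]
    exact_mod_cast hsum
  have hQ := Qform_sub_Qform_of_sum_eq hsum'
  obtain ⟨hle, hiff⟩ := sum_sq_le_sum_sq_of_sum_eq hvals e' hsum'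
  refine ⟨by linarith, ?_⟩
  calc Qform p (fun i => (e' i : ℚ)) = Qform p (vecTB p t b)
      ↔ ∑ i, (e' i : ℚ) ^ 2 = ∑ i, vecTB p t b i ^ 2 := by
        rw [← sub_eq_zero, hQ, sub_eq_zero, eq_comm]
    _ ↔ ∀ i, (e' i : ℚ) = (t : ℤ) ∨ (e' i : ℚ) = (t : ℤ) + 1 := hiff
    _ ↔ ∃ σ : Equiv.Perm (Fin (p-1)), ∀ i, (e' i : ℚ) = vecTB p t b (σ i) :=
        ⟨fun h => exists_perm_of_sum_eq h hvals hsum', fun ⟨σ, hσ⟩ i => hσ i ▸ hvals (σ i)⟩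

/-- if `e' ∈ ℤ^{p-1}` has coordinate sum `(p-1)t + b`, then
`Q(e') ≤ Q(⟨t,t+1;b⟩)`, with equality iff `e'` is a coordinate permutation of
`⟨t,t+1;b⟩`. -/
theorem stmt_8 (p t b : ℕ) (hp : 2 ≤ p) (hb1 : 1 ≤ b) (hb2 : b ≤ p - 1)
    (e' : Fin (p-1) → ℤ)
    (hsum : ∑ i, e' i = ((p : ℤ) - 1) * t + b) :
    Qform p (fun i => (e' i : ℚ)) ≤ Qform p (vecTB p t b) ∧
    (Qform p (fun i => (e' i : ℚ)) = Qform p (vecTB p t b) ↔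
      ∃ σ : Equiv.Perm (Fin (p-1)), ∀ i, (e' i : ℚ) = vecTB p t b (σ i)) :=
  stmt_8_general p t b hp hb2 e' hsum
end

section
/- For every integer p ≥ 2, the matrix A is invertible over ℚ, and P = -A·Aᵀ; equivalently, Aᵀ·P⁻¹·A = -I and P·(Aᵀ)⁻¹ = -A. -/
open Matrix

/-- The matrix `A` whose `i`-th row (1-indexed, `1 ≤ i ≤ p-2`) is `ω_{p-i-1} - ω_{p-i}`
and whose `(p-1)`-st row is `-2ω_1 - ω_2 - ⋯ - ω_{p-1}`, where `ω_1,…,ω_{p-1}` is the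
standard basis. (Here rows/columns are 0-indexed by `Fin (p-1)`.) -/
def matA (p : ℕ) : Matrix (Fin (p-1)) (Fin (p-1)) ℚ :=
  Matrix.of fun i j =>
    if (i : ℕ) = p - 2 then (if (j : ℕ) = 0 then -2 else -1)
    else if (j : ℕ) + 3 + (i : ℕ) = p then 1
    else if (j : ℕ) + 2 + (i : ℕ) = p then -1
    else 0

/-- Candidate inverse of `matA`. -/
def matB (p : ℕ) : Matrix (Fin (p-1)) (Fin (p-1)) ℚ :=
  Matrix.of fun i j =>
    if (i : ℕ) + (j : ℕ) + 3 ≤ p then (((j:ℕ) : ℚ) + 1) / p else (((j:ℕ) : ℚ) + 1 - p) / p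

lemma sum_ind (n a : ℕ) (ha : a < n) (f : ℕ → ℚ) :
    ∑ k ∈ Finset.range n, (if k = a then f k else 0) = f a := by
  rw [Finset.sum_ite_eq', if_pos (Finset.mem_range.mpr ha)]

lemma sum_two (n a b : ℕ) (ha : a < n) (hb : b < n) (hab : a ≠ b) (f g : ℕ → ℚ) :
    ∑ k ∈ Finset.range n, (if k = a then f k else if k = b then g k else 0) = f a + g b := by
  have h : ∀ k, (if k = a then f k else if k = b then g k else 0)
      = (if k = a then f k else 0) + (if k = b then g k else 0) := by
    intro k
    split_ifs with h1 h2 <;> simp_all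
  simp only [h, Finset.sum_add_distrib, sum_ind n a ha, sum_ind n b hb]

lemma sum_if_lt (q1 q2 : ℚ) (t s : ℕ) :
    ∑ k ∈ Finset.range (t + s), (if k < t then q1 else q2) = t * q1 + s * q2 := by
  induction s with
  | zero =>
      rw [Nat.add_zero, Finset.sum_congr rfl
        (fun k hk => if_pos (Finset.mem_range.mp hk)), Finset.sum_const, Finset.card_range]
      push_cast; ring
  | succ s ih =>
      rw [show t + (s+1) = (t+s)+1 by ring, Finset.sum_range_succ, ih,
        if_neg (by omega)]
      push_cast; ring

/-- Sum against a generic row `≠ p-2` of `matA`. -/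
lemma row_entry (p : ℕ) (i : ℕ) (hi : i + 2 < p) (f : ℕ → ℚ) :
    ∑ k ∈ Finset.range (p-1), (if k + 3 + i = p then 1 else if k + 2 + i = p then -1 else 0) * f k
    = f (p - 3 - i) - f (p - 2 - i) := by
  have h : ∀ k ∈ Finset.range (p-1),
      (if k + 3 + i = p then (1:ℚ) else if k + 2 + i = p then -1 else 0) * f k
      = (if k = p - 3 - i then f k else if k = p - 2 - i then -f k else 0) := by
    intro k hk
    have hk' := Finset.mem_range.mp hk
    split_ifs <;> first | ring1 | (exfalso; omega)
  rw [Finset.sum_congr rfl h,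
    sum_two (p-1) (p-3-i) (p-2-i) (by omega) (by omega) (by omega) f (fun m => -f m)]
  ring

/-- Sum against the last row of `matA`. -/
lemma last_row (n : ℕ) (hn : 0 < n) (f : ℕ → ℚ) :
    ∑ k ∈ Finset.range n, (if k = 0 then -2 else -1) * f k
    = -(∑ k ∈ Finset.range n, f k) - f 0 := by
  have h : ∀ k, (if k = 0 then (-2:ℚ) else -1) * f k
      = -f k + (if k = 0 then -f 0 else 0) := by
    intro k
    split_ifs with h1
    · subst h1; ring
    · ring
  rw [Finset.sum_congr rfl (fun k _ => h k), Finset.sum_add_distrib,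
    sum_ind n 0 hn (fun _ => -f 0), Finset.sum_neg_distrib]
  ring

/-- Column sums of `matB`. -/
lemma col_sum (p jv : ℕ) (hp : 2 ≤ p) (hj : jv < p - 1) :
    ∑ k ∈ Finset.range (p-1),
        (if k + jv + 3 ≤ p then ((jv:ℚ)+1)/p else ((jv:ℚ)+1-p)/p)
    = ((p - 2 - jv : ℕ) : ℚ) * (((jv:ℚ)+1)/p) + ((jv+1 : ℕ) : ℚ) * (((jv:ℚ)+1-p)/p) := by
  have h1 : ∀ k ∈ Finset.range (p - 2 - jv + (jv+1)),
      (if k + jv + 3 ≤ p then ((jv:ℚ)+1)/p else ((jv:ℚ)+1-p)/p)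
      = (if k < p - 2 - jv then ((jv:ℚ)+1)/p else ((jv:ℚ)+1-p)/p) := by
    intro k hk
    have hkk := Finset.mem_range.mp hk
    split_ifs <;> first | rfl | (exfalso; omega)
  rw [show p - 1 = (p - 2 - jv) + (jv+1) by omega, Finset.sum_congr rfl h1, sum_if_lt]

/-- The sum of the last row of `matA`. -/
lemma last_row_sum (n : ℕ) (hn : 0 < n) :
    ∑ k ∈ Finset.range n, (if k = 0 then (-2:ℚ) else -1) = -((n:ℚ)) - 1 := by
  have h : ∀ k ∈ Finset.range n, (if k = 0 then (-2:ℚ) else -1)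
      = -1 + (if k = 0 then (-1:ℚ) else 0) := by
    intro k _; split_ifs <;> ring
  rw [Finset.sum_congr rfl h, Finset.sum_add_distrib, Finset.sum_const, Finset.card_range,
    sum_ind n 0 hn (fun _ => (-1:ℚ))]
  ring

/-- `A` is invertible over `ℚ` and `P = -A·Aᵀ`; equivalently,
`Aᵀ·P⁻¹·A = -I` and `P·(Aᵀ)⁻¹ = -A`. -/
theorem stmt_12 (p : ℕ) (hp : 2 ≤ p) :
    IsUnit (matA p).det ∧
    plumbing p = -(matA p * (matA p).transpose) ∧
    (matA p).transpose * (plumbing p)⁻¹ * matA p = -1 ∧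
    plumbing p * ((matA p).transpose)⁻¹ = -(matA p) := by
  have hp0 : (p : ℚ) ≠ 0 := by positivity
  -- A * B = 1
  have hAB : matA p * matB p = 1 := by
    ext i j
    have hi := i.isLt
    have hj := j.isLt
    rw [Matrix.mul_apply]
    rw [show (∑ k : Fin (p-1), matA p i k * matB p k j)
        = ∑ m ∈ Finset.range (p-1),
            (if (i:ℕ) = p - 2 then (if m = 0 then (-2:ℚ) else -1)
              else if m + 3 + (i:ℕ) = p then 1 else if m + 2 + (i:ℕ) = p then -1 else 0)
          * (if m + (j:ℕ) + 3 ≤ p then (((j:ℕ):ℚ)+1)/p else (((j:ℕ):ℚ)+1-p)/p)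
      from Fin.sum_univ_eq_sum_range (fun m =>
            (if (i:ℕ) = p - 2 then (if m = 0 then (-2:ℚ) else -1)
              else if m + 3 + (i:ℕ) = p then 1 else if m + 2 + (i:ℕ) = p then -1 else 0)
          * (if m + (j:ℕ) + 3 ≤ p then (((j:ℕ):ℚ)+1)/p else (((j:ℕ):ℚ)+1-p)/p)) (p-1)]
    by_cases hcase : (i:ℕ) = p - 2
    · simp only [hcase, if_pos rfl, if_true]
      rw [last_row (p-1) (by omega), col_sum p (j:ℕ) hp hj]
      have c1 : ((p - 2 - (j:ℕ) : ℕ) : ℚ) = (p:ℚ) - 2 - ((j:ℕ):ℚ) := by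
        rw [Nat.cast_sub (by omega : (j:ℕ) ≤ p - 2), Nat.cast_sub (by omega : 2 ≤ p)]
        norm_num
      rw [c1, Matrix.one_apply]
      by_cases hjj : (j:ℕ) = p - 2
      · rw [if_neg (show ¬(0 + (j:ℕ) + 3 ≤ p) by omega),
          if_pos (show i = j from Fin.ext (by omega))]
        have hjq : ((j:ℕ):ℚ) = (p:ℚ) - 2 := by
          rw [hjj, Nat.cast_sub (by omega : 2 ≤ p)]; norm_num
        push_cast
        rw [hjq]
        field_simp
        ring
      · rw [if_pos (show 0 + (j:ℕ) + 3 ≤ p by omega),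
          if_neg (show ¬ i = j from fun h => hjj (h ▸ hcase))]
        push_cast
        field_simp
        ring
    · simp only [if_neg hcase]
      rw [row_entry p (i:ℕ) (by omega)]
      simp only [Matrix.one_apply, Fin.ext_iff]
      split_ifs <;> first | ring1 | (field_simp <;> ring1) | (exfalso; omega)
  have hBA : matB p * matA p = 1 := mul_eq_one_comm.mp hAB
  have hdet : IsUnit (matA p).det := Matrix.isUnit_det_of_right_inverse hAB
  have e1 : (matA p)ᵀ * (matB p)ᵀ = 1 := by
    rw [← Matrix.transpose_mul, hBA, Matrix.transpose_one]
  -- P = -(A * Aᵀ)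
  have hP : plumbing p = -(matA p * (matA p).transpose) := by
    ext i j
    have hi := i.isLt
    have hj := j.isLt
    rw [Matrix.neg_apply, Matrix.mul_apply]
    rw [show (∑ k : Fin (p-1), matA p i k * (matA p)ᵀ k j)
        = ∑ m ∈ Finset.range (p-1),
            (if (i:ℕ) = p - 2 then (if m = 0 then (-2:ℚ) else -1)
              else if m + 3 + (i:ℕ) = p then 1 else if m + 2 + (i:ℕ) = p then -1 else 0)
          * (if (j:ℕ) = p - 2 then (if m = 0 then (-2:ℚ) else -1)
              else if m + 3 + (j:ℕ) = p then 1 else if m + 2 + (j:ℕ) = p then -1 else 0)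
      from Fin.sum_univ_eq_sum_range (fun m =>
            (if (i:ℕ) = p - 2 then (if m = 0 then (-2:ℚ) else -1)
              else if m + 3 + (i:ℕ) = p then 1 else if m + 2 + (i:ℕ) = p then -1 else 0)
          * (if (j:ℕ) = p - 2 then (if m = 0 then (-2:ℚ) else -1)
              else if m + 3 + (j:ℕ) = p then 1 else if m + 2 + (j:ℕ) = p then -1 else 0)) (p-1)]
    by_cases hci : (i:ℕ) = p - 2 <;> by_cases hcj : (j:ℕ) = p - 2
    · -- i = j = p-2
      simp only [hci, hcj, if_pos rfl, if_true]
      rw [last_row (p-1) (by omega) (fun m => if m = 0 then (-2:ℚ) else -1),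
        last_row_sum (p-1) (by omega), Nat.cast_sub (by omega : 1 ≤ p),
        if_pos rfl]
      simp only [plumbing, Matrix.of_apply, if_pos (Fin.ext (show (i:ℕ) = (j:ℕ) by omega)),
        if_pos hci]
      push_cast
      ring
    · -- i = p-2, j ≠ p-2
      simp only [hci, if_pos rfl, if_true, if_neg hcj]
      have flip : ∑ m ∈ Finset.range (p-1),
          (if m = 0 then (-2:ℚ) else -1)
            * (if m + 3 + (j:ℕ) = p then 1 else if m + 2 + (j:ℕ) = p then -1 else 0)
          = ∑ m ∈ Finset.range (p-1),
          (if m + 3 + (j:ℕ) = p then (1:ℚ) else if m + 2 + (j:ℕ) = p then -1 else 0)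
            * (if m = 0 then (-2:ℚ) else -1) :=
        Finset.sum_congr rfl (fun k _ => mul_comm _ _)
      rw [flip, row_entry p (j:ℕ) (by omega)]
      simp only [plumbing, Matrix.of_apply, Fin.ext_iff]
      split_ifs <;> first | ring1 | (exfalso; omega)
    · -- i ≠ p-2, j = p-2
      simp only [hcj, if_pos rfl, if_true, if_neg hci]
      rw [row_entry p (i:ℕ) (by omega)]
      simp only [plumbing, Matrix.of_apply, Fin.ext_iff]
      split_ifs <;> first | ring1 | (exfalso; omega)
    · -- both ≠ p-2
      simp only [if_neg hci, if_neg hcj]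
      rw [row_entry p (i:ℕ) (by omega)]
      simp only [plumbing, Matrix.of_apply, Fin.ext_iff]
      split_ifs <;> first | ring1 | (exfalso; omega)
  -- inverses
  have hPinv : (plumbing p)⁻¹ = -((matB p)ᵀ * matB p) := by
    apply Matrix.inv_eq_right_inv
    rw [hP, neg_mul_neg, Matrix.mul_assoc, ← Matrix.mul_assoc ((matA p)ᵀ), e1,
      Matrix.one_mul, hAB]
  have hTinv : ((matA p)ᵀ)⁻¹ = (matB p)ᵀ := Matrix.inv_eq_right_inv e1
  refine ⟨hdet, hP, ?_, ?_⟩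
  · rw [hPinv]
    have h2 : (matA p)ᵀ * -((matB p)ᵀ * matB p) * matA p
        = -(((matA p)ᵀ * (matB p)ᵀ) * (matB p * matA p)) := by
      noncomm_ring
    rw [h2, e1, hBA, Matrix.one_mul]
  · rw [hP, hTinv, Matrix.neg_mul, Matrix.mul_assoc, e1, Matrix.mul_one]
end

section
/- Let p ≥ 2 be an integer. For every vector ε ∈ ℚ^{p-1}, the last coordinate of the vector x = P⁻¹·A·ε equals (Σ_{i=1}^{p-1} ε_i)/p. In particular, the bottom row of P⁻¹ is -(1/p²)·(1, 2, …, p-1). -/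
/-- Explicit candidate for `P⁻¹`. -/
def Qmat (p : ℕ) : Matrix (Fin (p-1)) (Fin (p-1)) ℚ :=
  Matrix.of fun i j =>
    -(((min (i:ℕ) (j:ℕ) : ℕ) + 1 : ℚ) * (p:ℚ)^2
        - ((i:ℕ) + 1 : ℚ) * ((j:ℕ) + 1 : ℚ) * ((p:ℚ) + 1)) / (p:ℚ)^2

lemma sum_delta {n : ℕ} (P : ℕ → Prop) [DecidablePred P] (f : Fin n → ℚ) (m : ℕ)
    (hm : ∀ j, j < n → (P j ↔ j = m)) :
    (∑ j : Fin n, if P (j : ℕ) then f j else 0) = if h : m < n then f ⟨m, h⟩ else 0 := by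
  split_ifs with h
  · rw [Finset.sum_eq_single (⟨m, h⟩ : Fin n)]
    · rw [if_pos ((hm m h).mpr rfl)]
    · intro b _ hb
      rw [if_neg]
      intro hP
      exact hb (Fin.ext ((hm b b.isLt).mp hP))
    · exact fun h' => absurd (Finset.mem_univ _) h'
  · apply Finset.sum_eq_zero
    intro j _
    rw [if_neg]
    intro hP
    have h1 := (hm j j.isLt).mp hP
    have h2 := j.isLt
    omega

lemma plumbing_decomp (p : ℕ) (i j : Fin (p-1)) :
    plumbing p i j =
      (if (j:ℕ) = (i:ℕ) then (if (i:ℕ) = p - 2 then -((p:ℚ)+2) else -2) else 0)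
      + (if (j:ℕ) = (i:ℕ)+1 then 1 else 0)
      + (if (j:ℕ)+1 = (i:ℕ) then 1 else 0) := by
  have hi := i.isLt
  have hj := j.isLt
  simp only [plumbing, Matrix.of_apply, Fin.ext_iff]
  split_ifs <;> first | omega | norm_num

lemma matA_decomp (p : ℕ) (j k : Fin (p-1)) :
    matA p j k =
      (if (j:ℕ) = p-2 then (if (k:ℕ) = 0 then (-2:ℚ) else -1) else 0)
      + (if (j:ℕ) + ((k:ℕ)+3) = p then 1 else 0)
      + (if (j:ℕ) + ((k:ℕ)+2) = p ∧ 0 < (k:ℕ) then -1 else 0) := by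
  have hj := j.isLt
  have hk := k.isLt
  simp only [matA, Matrix.of_apply]
  split_ifs <;> first | omega | norm_num

lemma plumbing_mul_Qmat (p : ℕ) (hp : 2 ≤ p) : plumbing p * Qmat p = 1 := by
  have hp0 : (p:ℚ) ≠ 0 := by positivity
  ext i k
  have hi := i.isLt
  have hk := k.isLt
  rw [Matrix.mul_apply]
  simp only [plumbing_decomp, add_mul, ite_mul, zero_mul, Finset.sum_add_distrib]
  have hd1 := sum_delta (fun m => m = (i:ℕ))
      (fun j => if (i:ℕ) = p - 2 then -((p:ℚ)+2) * Qmat p j k else -2 * Qmat p j k) (i:ℕ)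
      (fun j _ => Iff.rfl)
  have hd2 := sum_delta (fun m => m = (i:ℕ)+1)
      (fun j => (1:ℚ) * Qmat p j k) ((i:ℕ)+1) (fun j _ => Iff.rfl)
  simp only [hd1, hd2]
  rw [dif_pos hi, Fin.eta]
  rcases Nat.eq_zero_or_pos (i:ℕ) with hi0 | hi0
  · -- first row
    have hd3 := sum_delta (fun m => m + 1 = (i:ℕ))
        (fun j => (1:ℚ) * Qmat p j k) (p-1) (fun j hj => by omega)
    simp only [hd3]
    rw [dif_neg (by omega : ¬ (p-1 < p-1))]
    by_cases hil : (i:ℕ) = p-2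
    · -- p = 2 : single row
      have hp2 : p = 2 := by omega
      subst hp2
      rw [if_pos hil, dif_neg (by omega)]
      have hik : i = k := Fin.ext (by omega)
      subst hik
      rw [Matrix.one_apply_eq]
      have e1 : min (i:ℕ) (i:ℕ) = (i:ℕ) := by omega
      simp only [Qmat, Matrix.of_apply]
      rw [e1]
      simp only [hi0]
      norm_num
    · rw [if_neg hil, dif_pos (by omega : (i:ℕ)+1 < p-1)]
      rcases eq_or_ne i k with rfl | hik
      · rw [Matrix.one_apply_eq]
        have e1 : min (i:ℕ) (i:ℕ) = (i:ℕ) := by omega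
        have e2 : min ((i:ℕ)+1) (i:ℕ) = (i:ℕ) := by omega
        simp only [Qmat, Matrix.of_apply, Fin.val_mk]
        rw [e1, e2]
        simp only [hi0]
        push_cast
        field_simp
        ring
      · rw [Matrix.one_apply_ne hik]
        have hik' : (i:ℕ) ≠ (k:ℕ) := fun h => hik (Fin.ext h)
        have hki : 0 < (k:ℕ) := by omega
        have e1 : min (i:ℕ) (k:ℕ) = (i:ℕ) := by omega
        have e3 : min ((i:ℕ)+1) (k:ℕ) = (i:ℕ)+1 := by omega
        simp only [Qmat, Matrix.of_apply, Fin.val_mk]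
        rw [e1, e3]
        simp only [hi0]
        push_cast
        field_simp
        ring
  · -- i ≥ 1
    obtain ⟨a, ha⟩ : ∃ a, (i:ℕ) = a + 1 := ⟨(i:ℕ)-1, by omega⟩
    have hd3 := sum_delta (fun m => m + 1 = (i:ℕ))
        (fun j => (1:ℚ) * Qmat p j k) a (fun j hj => by omega)
    simp only [hd3]
    rw [dif_pos (by omega : a < p-1)]
    by_cases hil : (i:ℕ) = p-2
    · -- last row
      have hpa : p = a + 3 := by omega
      rw [if_pos hil, dif_neg (by omega : ¬ ((i:ℕ)+1 < p-1))]
      rcases eq_or_ne i k with rfl | hik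
      · rw [Matrix.one_apply_eq]
        have e1 : min (i:ℕ) (i:ℕ) = (i:ℕ) := by omega
        have e2 : min a (i:ℕ) = a := by omega
        simp only [Qmat, Matrix.of_apply, Fin.val_mk]
        rw [e1, e2]
        simp only [ha, hpa]
        push_cast
        field_simp
        ring
      · rw [Matrix.one_apply_ne hik]
        have hik' : (i:ℕ) ≠ (k:ℕ) := fun h => hik (Fin.ext h)
        have hkla : (k:ℕ) ≤ a := by omega
        have e1 : min (i:ℕ) (k:ℕ) = (k:ℕ) := by omega
        have e2 : min a (k:ℕ) = (k:ℕ) := by omega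
        simp only [Qmat, Matrix.of_apply, Fin.val_mk]
        rw [e1, e2]
        simp only [ha, hpa]
        push_cast
        field_simp
        ring
    · -- middle row
      rw [if_neg hil, dif_pos (by omega : (i:ℕ)+1 < p-1)]
      rcases eq_or_ne i k with rfl | hik
      · rw [Matrix.one_apply_eq]
        have e1 : min (i:ℕ) (i:ℕ) = (i:ℕ) := by omega
        have e2 : min ((i:ℕ)+1) (i:ℕ) = (i:ℕ) := by omega
        have e3 : min a (i:ℕ) = a := by omega
        simp only [Qmat, Matrix.of_apply, Fin.val_mk]
        rw [e1, e2, e3]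
        simp only [ha]
        push_cast
        field_simp
        ring
      · rw [Matrix.one_apply_ne hik]
        have hik' : (i:ℕ) ≠ (k:ℕ) := fun h => hik (Fin.ext h)
        rcases Nat.lt_or_ge ((k:ℕ)) ((i:ℕ)) with h | h
        · have e1 : min (i:ℕ) (k:ℕ) = (k:ℕ) := by omega
          have e2 : min ((i:ℕ)+1) (k:ℕ) = (k:ℕ) := by omega
          have e3 : min a (k:ℕ) = (k:ℕ) := by omega
          simp only [Qmat, Matrix.of_apply, Fin.val_mk]
          rw [e1, e2, e3]
          simp only [ha]
          push_cast
          field_simp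
          ring
        · have hik2 : (i:ℕ) < (k:ℕ) := by omega
          have e1 : min (i:ℕ) (k:ℕ) = (i:ℕ) := by omega
          have e2 : min ((i:ℕ)+1) (k:ℕ) = (i:ℕ)+1 := by omega
          have e3 : min a (k:ℕ) = a := by omega
          simp only [Qmat, Matrix.of_apply, Fin.val_mk]
          rw [e1, e2, e3]
          simp only [ha]
          push_cast
          field_simp
          ring

/-- for every `ε ∈ ℚ^{p-1}`, the last coordinate of `x = P⁻¹·A·ε` is
`(Σ ε_i)/p`; in particular the bottom row of `P⁻¹` is `-(1/p²)·(1,2,…,p-1)`. -/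
theorem stmt_13 (p : ℕ) (hp : 2 ≤ p) :
    (∀ ε : Fin (p-1) → ℚ,
      (plumbing p)⁻¹.mulVec ((matA p).mulVec ε) ⟨p - 2, by omega⟩ = (∑ i, ε i) / p) ∧
    (∀ j : Fin (p-1),
      (plumbing p)⁻¹ ⟨p - 2, by omega⟩ j = -(1 / (p : ℚ)^2) * ((j : ℕ) + 1)) := by
  have hp0 : (p:ℚ) ≠ 0 := by positivity
  have hinv : (plumbing p)⁻¹ = Qmat p := Matrix.inv_eq_right_inv (plumbing_mul_Qmat p hp)
  have h2 : ∀ j : Fin (p-1),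
      (plumbing p)⁻¹ ⟨p - 2, by omega⟩ j = -(1 / (p : ℚ)^2) * ((j : ℕ) + 1) := by
    intro j
    have hj := j.isLt
    rw [hinv]
    simp only [Qmat, Matrix.of_apply, Fin.val_mk]
    have e1 : min (p-2) (j:ℕ) = (j:ℕ) := by omega
    rw [e1]
    have e2 : ((p - 2 : ℕ) : ℚ) = (p:ℚ) - 2 := by
      push_cast [Nat.cast_sub hp]; ring
    rw [e2]
    field_simp
    ring
  refine ⟨?_, h2⟩
  intro ε
  have hA : ∀ k : Fin (p-1),
      (∑ j : Fin (p-1), (-((((j:ℕ):ℚ)+1)/(p:ℚ)^2)) * matA p j k) = 1/(p:ℚ) := by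
    intro k
    have hk := k.isLt
    simp only [matA_decomp, mul_add, mul_ite, mul_zero, Finset.sum_add_distrib]
    have hd1 := sum_delta (n := p-1) (fun m => m = p-2)
        (fun j => if (k:ℕ) = 0 then (-((((j:ℕ):ℚ)+1)/(p:ℚ)^2)) * (-2:ℚ)
          else (-((((j:ℕ):ℚ)+1)/(p:ℚ)^2)) * (-1:ℚ)) (p-2)
        (fun j _ => Iff.rfl)
    simp only [hd1]
    rw [dif_pos (by omega : p-2 < p-1)]
    have e0 : ((p - 2 : ℕ) : ℚ) = (p:ℚ) - 2 := by push_cast [Nat.cast_sub hp]; ring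
    by_cases hk3 : (k:ℕ) + 3 ≤ p
    · have hd2 := sum_delta (n := p-1) (fun m => m + ((k:ℕ)+3) = p)
          (fun j => (-((((j:ℕ):ℚ)+1)/(p:ℚ)^2)) * (1:ℚ)) (p-((k:ℕ)+3))
          (fun j hj => by omega)
      simp only [hd2]
      rw [dif_pos (by omega : p-((k:ℕ)+3) < p-1)]
      have e1 : ((p - ((k:ℕ)+3) : ℕ) : ℚ) = (p:ℚ) - ((k:ℕ):ℚ) - 3 := by
        rw [Nat.cast_sub (by omega)]; push_cast; ring
      rcases Nat.eq_zero_or_pos (k:ℕ) with hk0 | hk0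
      · have hd3 := sum_delta (n := p-1) (fun m => m + ((k:ℕ)+2) = p ∧ 0 < (k:ℕ))
            (fun j => (-((((j:ℕ):ℚ)+1)/(p:ℚ)^2)) * (-1:ℚ)) (p-1)
            (fun j hj => by omega)
        simp only [hd3]
        rw [dif_neg (by omega : ¬ (p-1 < p-1)), if_pos hk0]
        try simp only [Fin.val_mk]
        rw [e0, e1]
        simp only [hk0]
        push_cast
        field_simp
        ring
      · have hd3 := sum_delta (n := p-1) (fun m => m + ((k:ℕ)+2) = p ∧ 0 < (k:ℕ))
            (fun j => (-((((j:ℕ):ℚ)+1)/(p:ℚ)^2)) * (-1:ℚ)) (p-((k:ℕ)+2))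
            (fun j hj => by omega)
        simp only [hd3]
        rw [dif_pos (by omega : p-((k:ℕ)+2) < p-1), if_neg (by omega : ¬ (k:ℕ) = 0)]
        have e2 : ((p - ((k:ℕ)+2) : ℕ) : ℚ) = (p:ℚ) - ((k:ℕ):ℚ) - 2 := by
          rw [Nat.cast_sub (by omega)]; push_cast; ring
        try simp only [Fin.val_mk]
        rw [e0, e1, e2]
        field_simp
        ring
    · -- k + 3 > p : second delta empty; k ≥ 1 here? (k = p-2)
      have hd2 := sum_delta (n := p-1) (fun m => m + ((k:ℕ)+3) = p)
          (fun j => (-((((j:ℕ):ℚ)+1)/(p:ℚ)^2)) * (1:ℚ)) (p-1)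
          (fun j hj => by omega)
      simp only [hd2]
      rw [dif_neg (by omega : ¬ (p-1 < p-1))]
      have hkp : (k:ℕ) = p - 2 := by omega
      rcases Nat.eq_zero_or_pos (k:ℕ) with hk0 | hk0
      · -- p = 2, k = 0
        have hd3 := sum_delta (n := p-1) (fun m => m + ((k:ℕ)+2) = p ∧ 0 < (k:ℕ))
            (fun j => (-((((j:ℕ):ℚ)+1)/(p:ℚ)^2)) * (-1:ℚ)) (p-1)
            (fun j hj => by omega)
        simp only [hd3]
        rw [dif_neg (by omega : ¬ (p-1 < p-1)), if_pos hk0]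
        have hp2 : p = 2 := by omega
        subst hp2
        try simp only [Fin.val_mk]
        norm_num
      · have hd3 := sum_delta (n := p-1) (fun m => m + ((k:ℕ)+2) = p ∧ 0 < (k:ℕ))
            (fun j => (-((((j:ℕ):ℚ)+1)/(p:ℚ)^2)) * (-1:ℚ)) (p-((k:ℕ)+2))
            (fun j hj => by omega)
        simp only [hd3]
        rw [dif_pos (by omega : p-((k:ℕ)+2) < p-1), if_neg (by omega : ¬ (k:ℕ) = 0)]
        have e2 : ((p - ((k:ℕ)+2) : ℕ) : ℚ) = (p:ℚ) - ((k:ℕ):ℚ) - 2 := by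
          rw [Nat.cast_sub (by omega)]; push_cast; ring
        have e3 : ((k:ℕ):ℚ) = (p:ℚ) - 2 := by
          rw [hkp, Nat.cast_sub hp]; push_cast; ring
        try simp only [Fin.val_mk]
        rw [e0, e2, e3]
        field_simp
        ring
  rw [Matrix.mulVec_mulVec]
  rw [Matrix.mulVec, dotProduct]
  have hrow : ∀ k : Fin (p-1),
      ((plumbing p)⁻¹ * matA p) ⟨p-2, by omega⟩ k = 1/p := by
    intro k
    rw [Matrix.mul_apply]
    rw [← hA k]
    exact Finset.sum_congr rfl fun j _ => by rw [h2 j]; ring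
  calc (∑ k, ((plumbing p)⁻¹ * matA p) ⟨p-2, by omega⟩ k * ε k)
      = ∑ k, (1/(p:ℚ)) * ε k := Finset.sum_congr rfl fun k _ => by rw [hrow k]
    _ = (∑ i, ε i) / p := by rw [← Finset.mul_sum]; ring
end

section
/- Let p ≥ 3 be an odd integer, and let b_0, b_2, b_4, …, b_{p-1} be real numbers such that for every real number y: cosh(p·y)·(b_0 + 2·Σ_{i=1}^{(p-1)/2} b_{2i}·cosh(2i·y)) = cosh(y)·(b_0 + 2·Σ_{i=1}^{(p-1)/2} b_{2i}·cosh(4i·y)), and such that b_0 + 2·Σ_{i=1}^{(p-1)/2} b_{2i} = p. Then b_0 = b_2 = b_4 = ⋯ = b_{p-1} = 1. -/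
open Polynomial Finset Real


noncomputable def cc19 (b : ℕ → ℝ) (j : ℕ) : ℝ := if j = 0 then b 0 else b (2*j)

noncomputable def PP19 (b : ℕ → ℝ) (n : ℕ) : Polynomial ℝ :=
  C (b 0) * (X^(6*n+2) + X^(2*n)) +
  ∑ i ∈ Icc 1 n, C (b (2*i)) * (X^(6*n+2+2*i) + X^(6*n+2-2*i) + X^(2*n+2*i) + X^(2*n-2*i))

noncomputable def QQ19 (b : ℕ → ℝ) (n : ℕ) : Polynomial ℝ :=
  C (b 0) * (X^(4*n+2) + X^(4*n)) +
  ∑ i ∈ Icc 1 n, C (b (2*i)) * (X^(4*n+2+4*i) + X^(4*n+2-4*i) + X^(4*n+4*i) + X^(4*n-4*i))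

lemma coshpow19 (y : ℝ) (m : ℕ) :
    Real.cosh ((m:ℝ)*y) = (exp y ^ m + (exp y ^ m)⁻¹)/2 := by
  rw [Real.cosh_eq, Real.exp_neg, Real.exp_nat_mul]

lemma evalPP19 (b : ℕ → ℝ) (n : ℕ) (y : ℝ) :
    eval (exp y) (PP19 b n)
      = 2 * exp ((4*(n:ℝ)+1)*y) * (Real.cosh ((2*(n:ℝ)+1) * y) *
          (b 0 + 2 * ∑ i ∈ Icc 1 n, b (2*i) * Real.cosh (2 * (i:ℝ) * y))) := by
  have hE : exp y ≠ 0 := Real.exp_ne_zero y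
  set E := exp y with hEdef
  have hcM : Real.cosh ((2*(n:ℝ)+1)*y) = (E^(2*n+1) + (E^(2*n+1))⁻¹)/2 := by
    rw [show (2*(n:ℝ)+1)*y = ((2*n+1:ℕ):ℝ)*y by push_cast; ring, coshpow19]
  have hA : exp ((4*(n:ℝ)+1)*y) = E^(4*n+1) := by
    rw [show (4*(n:ℝ)+1)*y = ((4*n+1:ℕ):ℝ)*y by push_cast; ring, Real.exp_nat_mul]
  have hsum : ∑ i ∈ Icc 1 n, b (2*i) * Real.cosh (2*(i:ℝ)*y)
      = (∑ i ∈ Icc 1 n, b (2*i) * (E^(2*i) + (E^(2*i))⁻¹))/2 := by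
    rw [Finset.sum_div]
    refine Finset.sum_congr rfl fun i _ => ?_
    rw [show 2*(i:ℝ)*y = ((2*i:ℕ):ℝ)*y by push_cast; ring, coshpow19]
    ring
  rw [hcM, hA, hsum]
  set S := ∑ i ∈ Icc 1 n, b (2*i) * (E^(2*i) + (E^(2*i))⁻¹) with hSdef
  have hmid : eval E (PP19 b n)
      = b 0 * (E^(4*n+1) * (E^(2*n+1) + (E^(2*n+1))⁻¹)) + E^(4*n+1) * (E^(2*n+1) + (E^(2*n+1))⁻¹) * S := by
    simp only [PP19, eval_add, eval_mul, eval_pow, eval_C, eval_X, eval_finset_sum]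
    rw [hSdef, Finset.mul_sum]
    congr 1
    · field_simp
      ring
    · refine Finset.sum_congr rfl fun i hi => ?_
      have hi' : i ≤ n := (Finset.mem_Icc.mp hi).2
      rw [pow_sub₀ _ hE (by omega : 2*i ≤ 6*n+2), pow_sub₀ _ hE (by omega : 2*i ≤ 2*n)]
      field_simp
      ring
  rw [hmid]
  field_simp

lemma evalQQ19 (b : ℕ → ℝ) (n : ℕ) (y : ℝ) :
    eval (exp y) (QQ19 b n)
      = 2 * exp ((4*(n:ℝ)+1)*y) * (Real.cosh y *
          (b 0 + 2 * ∑ i ∈ Icc 1 n, b (2*i) * Real.cosh (4 * (i:ℝ) * y))) := by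
  have hE : exp y ≠ 0 := Real.exp_ne_zero y
  set E := exp y with hEdef
  have hcM : Real.cosh y = (E + E⁻¹)/2 := by
    rw [Real.cosh_eq, Real.exp_neg]
  have hA : exp ((4*(n:ℝ)+1)*y) = E^(4*n+1) := by
    rw [show (4*(n:ℝ)+1)*y = ((4*n+1:ℕ):ℝ)*y by push_cast; ring, Real.exp_nat_mul]
  have hsum : ∑ i ∈ Icc 1 n, b (2*i) * Real.cosh (4*(i:ℝ)*y)
      = (∑ i ∈ Icc 1 n, b (2*i) * (E^(4*i) + (E^(4*i))⁻¹))/2 := by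
    rw [Finset.sum_div]
    refine Finset.sum_congr rfl fun i _ => ?_
    rw [show 4*(i:ℝ)*y = ((4*i:ℕ):ℝ)*y by push_cast; ring, coshpow19]
    ring
  rw [hcM, hA, hsum]
  set S := ∑ i ∈ Icc 1 n, b (2*i) * (E^(4*i) + (E^(4*i))⁻¹) with hSdef
  have hmid : eval E (QQ19 b n)
      = b 0 * (E^(4*n+1) * (E + E⁻¹)) + E^(4*n+1) * (E + E⁻¹) * S := by
    simp only [QQ19, eval_add, eval_mul, eval_pow, eval_C, eval_X, eval_finset_sum]
    rw [hSdef, Finset.mul_sum]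
    congr 1
    · field_simp
      ring
    · refine Finset.sum_congr rfl fun i hi => ?_
      have hi' : i ≤ n := (Finset.mem_Icc.mp hi).2
      rw [pow_sub₀ _ hE (by omega : 4*i ≤ 4*n+2), pow_sub₀ _ hE (by omega : 4*i ≤ 4*n)]
      field_simp
      ring
  rw [hmid]
  field_simp

lemma coeffPP19a (b : ℕ → ℝ) (n k : ℕ) (hk : k ≤ n) :
    (PP19 b n).coeff (4*n - 4*k) = cc19 b (if 2*k ≤ n then n - 2*k else 2*k - n) := by
  simp only [PP19, coeff_add, coeff_C_mul, Polynomial.finset_sum_coeff, coeff_X_pow]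
  rcases Nat.lt_or_ge (2*k) n with h2k | h2k
  · -- 2k < n, i0 = n - 2k ≥ 1
    have hs : ∑ x ∈ Finset.Icc 1 n,
        b (2 * x) *
          ((((if 4 * n - 4 * k = 6 * n + 2 + 2 * x then (1:ℝ) else 0) +
                if 4 * n - 4 * k = 6 * n + 2 - 2 * x then 1 else 0) +
              if 4 * n - 4 * k = 2 * n + 2 * x then 1 else 0) +
            if 4 * n - 4 * k = 2 * n - 2 * x then 1 else 0) = b (2*(n-2*k)) := by
      rw [Finset.sum_eq_single_of_mem (n-2*k) (Finset.mem_Icc.mpr ⟨by omega, by omega⟩)]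
      · rw [if_neg (by omega), if_neg (by omega), if_pos (by omega), if_neg (by omega)]; ring
      · intro i hi hne
        obtain ⟨hi1, hi2⟩ := Finset.mem_Icc.mp hi
        rw [if_neg (by omega), if_neg (by omega), if_neg (by omega), if_neg (by omega)]; ring
    rw [hs, if_neg (by omega), if_neg (by omega), if_pos (by omega)]
    simp only [cc19]
    rw [if_neg (by omega)]
    ring
  rcases Nat.lt_or_ge n (2*k) with h2k' | h2k'
  · -- 2k > n, i0 = 2k - n ≥ 1
    have hs : ∑ x ∈ Finset.Icc 1 n,
        b (2 * x) *
          ((((if 4 * n - 4 * k = 6 * n + 2 + 2 * x then (1:ℝ) else 0) +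
                if 4 * n - 4 * k = 6 * n + 2 - 2 * x then 1 else 0) +
              if 4 * n - 4 * k = 2 * n + 2 * x then 1 else 0) +
            if 4 * n - 4 * k = 2 * n - 2 * x then 1 else 0) = b (2*(2*k-n)) := by
      rw [Finset.sum_eq_single_of_mem (2*k-n) (Finset.mem_Icc.mpr ⟨by omega, by omega⟩)]
      · rw [if_neg (by omega), if_neg (by omega), if_neg (by omega), if_pos (by omega)]; ring
      · intro i hi hne
        obtain ⟨hi1, hi2⟩ := Finset.mem_Icc.mp hi
        rw [if_neg (by omega), if_neg (by omega), if_neg (by omega), if_neg (by omega)]; ring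
    rw [hs, if_neg (by omega), if_neg (by omega), if_neg (by omega)]
    simp only [cc19]
    rw [if_neg (by omega)]
    ring
  · -- n = 2k
    have hs : ∑ x ∈ Finset.Icc 1 n,
        b (2 * x) *
          ((((if 4 * n - 4 * k = 6 * n + 2 + 2 * x then (1:ℝ) else 0) +
                if 4 * n - 4 * k = 6 * n + 2 - 2 * x then 1 else 0) +
              if 4 * n - 4 * k = 2 * n + 2 * x then 1 else 0) +
            if 4 * n - 4 * k = 2 * n - 2 * x then 1 else 0) = 0 := by
      refine Finset.sum_eq_zero fun i hi => ?_
      obtain ⟨hi1, hi2⟩ := Finset.mem_Icc.mp hi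
      rw [if_neg (by omega), if_neg (by omega), if_neg (by omega), if_neg (by omega)]; ring
    rw [hs, if_neg (by omega), if_pos (by omega), if_pos (by omega)]
    have h0 : n - 2*k = 0 := by omega
    rw [h0]
    simp [cc19]

lemma coeffQQ19a (b : ℕ → ℝ) (n k : ℕ) (hk : k ≤ n) :
    (QQ19 b n).coeff (4*n - 4*k) = cc19 b k := by
  simp only [QQ19, coeff_add, coeff_C_mul, Polynomial.finset_sum_coeff, coeff_X_pow]
  rcases Nat.eq_zero_or_pos k with hk0 | hk0
  · subst hk0
    have hs : ∑ x ∈ Finset.Icc 1 n,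
        b (2 * x) *
          ((((if 4 * n - 4 * 0 = 4 * n + 2 + 4 * x then (1:ℝ) else 0) +
                if 4 * n - 4 * 0 = 4 * n + 2 - 4 * x then 1 else 0) +
              if 4 * n - 4 * 0 = 4 * n + 4 * x then 1 else 0) +
            if 4 * n - 4 * 0 = 4 * n - 4 * x then 1 else 0) = 0 := by
      refine Finset.sum_eq_zero fun i hi => ?_
      obtain ⟨hi1, hi2⟩ := Finset.mem_Icc.mp hi
      rw [if_neg (by omega), if_neg (by omega), if_neg (by omega), if_neg (by omega)]; ring
    rw [hs, if_neg (by omega), if_pos (by omega)]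
    simp [cc19]
  · have hs : ∑ x ∈ Finset.Icc 1 n,
        b (2 * x) *
          ((((if 4 * n - 4 * k = 4 * n + 2 + 4 * x then (1:ℝ) else 0) +
                if 4 * n - 4 * k = 4 * n + 2 - 4 * x then 1 else 0) +
              if 4 * n - 4 * k = 4 * n + 4 * x then 1 else 0) +
            if 4 * n - 4 * k = 4 * n - 4 * x then 1 else 0) = b (2*k) := by
      rw [Finset.sum_eq_single_of_mem k (Finset.mem_Icc.mpr ⟨by omega, by omega⟩)]
      · rw [if_neg (by omega), if_neg (by omega), if_neg (by omega), if_pos (by omega)]; ring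
      · intro i hi hne
        obtain ⟨hi1, hi2⟩ := Finset.mem_Icc.mp hi
        rw [if_neg (by omega), if_neg (by omega), if_neg (by omega), if_neg (by omega)]; ring
    rw [hs, if_neg (by omega), if_neg (by omega)]
    simp only [cc19]
    rw [if_neg (by omega)]
    ring

lemma coeffPP19b (b : ℕ → ℝ) (n k : ℕ) (hk1 : 1 ≤ k) (hk : k ≤ n) :
    (PP19 b n).coeff (4*n + 2 - 4*k)
      = cc19 b (if 2*k ≤ n + 1 then n + 1 - 2*k else 2*k - (n+1)) := by
  simp only [PP19, coeff_add, coeff_C_mul, Polynomial.finset_sum_coeff, coeff_X_pow]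
  rcases Nat.lt_or_ge (2*k) (n+1) with h2k | h2k
  · -- 2k ≤ n, i0 = n + 1 - 2k ≥ 1
    have hs : ∑ x ∈ Finset.Icc 1 n,
        b (2 * x) *
          ((((if 4 * n + 2 - 4 * k = 6 * n + 2 + 2 * x then (1:ℝ) else 0) +
                if 4 * n + 2 - 4 * k = 6 * n + 2 - 2 * x then 1 else 0) +
              if 4 * n + 2 - 4 * k = 2 * n + 2 * x then 1 else 0) +
            if 4 * n + 2 - 4 * k = 2 * n - 2 * x then 1 else 0) = b (2*(n+1-2*k)) := by
      rw [Finset.sum_eq_single_of_mem (n+1-2*k) (Finset.mem_Icc.mpr ⟨by omega, by omega⟩)]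
      · rw [if_neg (by omega), if_neg (by omega), if_pos (by omega), if_neg (by omega)]; ring
      · intro i hi hne
        obtain ⟨hi1, hi2⟩ := Finset.mem_Icc.mp hi
        rw [if_neg (by omega), if_neg (by omega), if_neg (by omega), if_neg (by omega)]; ring
    rw [hs, if_neg (by omega), if_neg (by omega), if_pos (by omega)]
    simp only [cc19]
    rw [if_neg (by omega)]
    ring
  rcases Nat.lt_or_ge (n+1) (2*k) with h2k' | h2k'
  · -- 2k ≥ n + 2, i0 = 2k - n - 1 ≥ 1
    have hs : ∑ x ∈ Finset.Icc 1 n,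
        b (2 * x) *
          ((((if 4 * n + 2 - 4 * k = 6 * n + 2 + 2 * x then (1:ℝ) else 0) +
                if 4 * n + 2 - 4 * k = 6 * n + 2 - 2 * x then 1 else 0) +
              if 4 * n + 2 - 4 * k = 2 * n + 2 * x then 1 else 0) +
            if 4 * n + 2 - 4 * k = 2 * n - 2 * x then 1 else 0) = b (2*(2*k-(n+1))) := by
      rw [Finset.sum_eq_single_of_mem (2*k-(n+1)) (Finset.mem_Icc.mpr ⟨by omega, by omega⟩)]
      · rw [if_neg (by omega), if_neg (by omega), if_neg (by omega), if_pos (by omega)]; ring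
      · intro i hi hne
        obtain ⟨hi1, hi2⟩ := Finset.mem_Icc.mp hi
        rw [if_neg (by omega), if_neg (by omega), if_neg (by omega), if_neg (by omega)]; ring
    rw [hs, if_neg (by omega), if_neg (by omega), if_neg (by omega)]
    simp only [cc19]
    rw [if_neg (by omega)]
    ring
  · -- 2k = n + 1
    have hs : ∑ x ∈ Finset.Icc 1 n,
        b (2 * x) *
          ((((if 4 * n + 2 - 4 * k = 6 * n + 2 + 2 * x then (1:ℝ) else 0) +
                if 4 * n + 2 - 4 * k = 6 * n + 2 - 2 * x then 1 else 0) +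
              if 4 * n + 2 - 4 * k = 2 * n + 2 * x then 1 else 0) +
            if 4 * n + 2 - 4 * k = 2 * n - 2 * x then 1 else 0) = 0 := by
      refine Finset.sum_eq_zero fun i hi => ?_
      obtain ⟨hi1, hi2⟩ := Finset.mem_Icc.mp hi
      rw [if_neg (by omega), if_neg (by omega), if_neg (by omega), if_neg (by omega)]; ring
    rw [hs, if_neg (by omega), if_pos (by omega), if_pos (by omega)]
    have h0 : n + 1 - 2*k = 0 := by omega
    rw [h0]
    simp [cc19]

lemma coeffQQ19b (b : ℕ → ℝ) (n k : ℕ) (hk1 : 1 ≤ k) (hk : k ≤ n) :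
    (QQ19 b n).coeff (4*n + 2 - 4*k) = cc19 b k := by
  simp only [QQ19, coeff_add, coeff_C_mul, Polynomial.finset_sum_coeff, coeff_X_pow]
  have hs : ∑ x ∈ Finset.Icc 1 n,
      b (2 * x) *
        ((((if 4 * n + 2 - 4 * k = 4 * n + 2 + 4 * x then (1:ℝ) else 0) +
              if 4 * n + 2 - 4 * k = 4 * n + 2 - 4 * x then 1 else 0) +
            if 4 * n + 2 - 4 * k = 4 * n + 4 * x then 1 else 0) +
          if 4 * n + 2 - 4 * k = 4 * n - 4 * x then 1 else 0) = b (2*k) := by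
    rw [Finset.sum_eq_single_of_mem k (Finset.mem_Icc.mpr ⟨by omega, by omega⟩)]
    · rw [if_neg (by omega), if_pos (by omega), if_neg (by omega), if_neg (by omega)]; ring
    · intro i hi hne
      obtain ⟨hi1, hi2⟩ := Finset.mem_Icc.mp hi
      rw [if_neg (by omega), if_neg (by omega), if_neg (by omega), if_neg (by omega)]; ring
  rw [hs, if_neg (by omega), if_neg (by omega)]
  simp only [cc19]
  rw [if_neg (by omega)]
  ring

lemma step19 (b : ℕ → ℝ) (n : ℕ) (hPQ : PP19 b n = QQ19 b n) :
    ∀ j, j < n → cc19 b j = cc19 b (j+1) := by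
  have rel1 : ∀ k, k ≤ n → cc19 b k = cc19 b (if 2*k ≤ n then n-2*k else 2*k-n) := by
    intro k hk
    rw [← coeffQQ19a b n k hk, ← coeffPP19a b n k hk, hPQ]
  have rel2 : ∀ k, 1 ≤ k → k ≤ n →
      cc19 b k = cc19 b (if 2*k ≤ n+1 then n+1-2*k else 2*k-(n+1)) := by
    intro k hk1 hk
    rw [← coeffQQ19b b n k hk1 hk, ← coeffPP19b b n k hk1 hk, hPQ]
  intro j hj
  rcases Nat.even_or_odd (n - j) with ⟨m, hm⟩ | ⟨m, hm⟩
  · -- n - j = 2m, m ≥ 1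
    have h1 := rel1 m (by omega)
    have h2 := rel2 m (by omega) (by omega)
    rw [show (if 2*m ≤ n then n-2*m else 2*m-n) = j by split <;> omega] at h1
    rw [show (if 2*m ≤ n+1 then n+1-2*m else 2*m-(n+1)) = j+1 by split <;> omega] at h2
    exact h1.symm.trans h2
  · -- n - j = 2m+1, take k = m + j + 1
    have h1 := rel1 (m+j+1) (by omega)
    have h2 := rel2 (m+j+1) (by omega) (by omega)
    rw [show (if 2*(m+j+1) ≤ n then n-2*(m+j+1) else 2*(m+j+1)-n) = j+1 by
      split <;> omega] at h1
    rw [show (if 2*(m+j+1) ≤ n+1 then n+1-2*(m+j+1) else 2*(m+j+1)-(n+1)) = j by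
      split <;> omega] at h2
    exact h2.symm.trans h1

lemma const19 (b : ℕ → ℝ) (n : ℕ) (hPQ : PP19 b n = QQ19 b n) :
    ∀ j, j ≤ n → cc19 b j = cc19 b 0 := by
  intro j
  induction j with
  | zero => intro _; rfl
  | succ j ih => intro hj; exact (step19 b n hPQ j (by omega)).symm.trans (ih (by omega))

/-- let `p ≥ 3` be odd and `b_0, b_2, …, b_{p-1}` real numbers with
`cosh(py)·(b_0 + 2·Σ_{i=1}^{(p-1)/2} b_{2i}·cosh(2iy))
  = cosh(y)·(b_0 + 2·Σ_{i=1}^{(p-1)/2} b_{2i}·cosh(4iy))` for all real `y`, and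
`b_0 + 2·Σ_{i=1}^{(p-1)/2} b_{2i} = p`. Then all the `b_{2i}` equal `1`. -/
theorem stmt_19 (p : ℕ) (hp : 3 ≤ p) (hodd : Odd p) (b : ℕ → ℝ)
    (h1 : ∀ y : ℝ,
      Real.cosh ((p : ℝ) * y) *
          (b 0 + 2 * ∑ i ∈ Finset.Icc 1 ((p - 1) / 2),
            b (2 * i) * Real.cosh (2 * (i : ℝ) * y)) =
        Real.cosh y *
          (b 0 + 2 * ∑ i ∈ Finset.Icc 1 ((p - 1) / 2),
            b (2 * i) * Real.cosh (4 * (i : ℝ) * y)))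
    (h2 : b 0 + 2 * ∑ i ∈ Finset.Icc 1 ((p - 1) / 2), b (2 * i) = (p : ℝ)) :
    ∀ i ≤ (p - 1) / 2, b (2 * i) = 1 := by
  obtain ⟨m, hm⟩ := hodd
  set n := (p - 1) / 2 with hn
  have hpn : p = 2*n + 1 := by omega
  have hn1 : 1 ≤ n := by omega
  have heval : ∀ y : ℝ, eval (exp y) (PP19 b n) = eval (exp y) (QQ19 b n) := by
    intro y
    rw [evalPP19, evalQQ19]
    have hc : ((p:ℝ)) = 2*(n:ℝ)+1 := by rw [hpn]; push_cast; ring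
    rw [← hc, h1 y]
  have hPQ : PP19 b n = QQ19 b n := by
    refine Polynomial.eq_of_infinite_eval_eq _ _ ?_
    refine Set.Infinite.mono ?_ (Set.infinite_range_of_injective Real.exp_injective)
    rintro x ⟨y, rfl⟩
    exact heval y
  have hconst := const19 b n hPQ
  have hb0 : b 0 = cc19 b 0 := by simp [cc19]
  have hbi : ∀ i, 1 ≤ i → i ≤ n → b (2*i) = cc19 b 0 := by
    intro i hi1 hi2
    rw [show b (2*i) = cc19 b i by simp only [cc19]; rw [if_neg (by omega)]]
    exact hconst i hi2
  have hcc0 : cc19 b 0 = 1 := by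
    have hsum : ∑ i ∈ Finset.Icc 1 n, b (2*i) = (n:ℝ) * cc19 b 0 := by
      rw [Finset.sum_congr rfl (fun i hi => hbi i (Finset.mem_Icc.mp hi).1 (Finset.mem_Icc.mp hi).2),
        Finset.sum_const, Nat.card_Icc]
      simp
    rw [hsum, hb0, hpn] at h2
    push_cast at h2
    have hne : (2*(n:ℝ)+1) ≠ 0 := by positivity
    have : cc19 b 0 * (2*(n:ℝ)+1) = 1 * (2*(n:ℝ)+1) := by linear_combination h2
    exact mul_right_cancel₀ hne this
  intro i hi
  rcases Nat.eq_zero_or_pos i with rfl | hi1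
  · simpa using hb0.trans hcc0
  · exact (hbi i hi1 hi).trans hcc0
end
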